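/- arXiv:1103.5069 — 7 statements merged into one kernel-verified Lean document; each statement's English description precedes it below -/
import Mathlib

section
/- Let ω be a Dini function (a bounded continuous increasing function on [0,∞) with ω(0)=0 and ∫₀¹ ω(s)/s ds < ∞), and let a ∈ (0,1), b > 1 be constants. Then the function ω̃(t) := Σ_{k=0}^∞ aᵏ ω(bᵏ t) is also a Dini function; in particular the series converges for all t ≥ 0, ω̃ is bounded, continuous, increasing, ω̃(0)=0, and ∫₀¹ ω̃(s)/s ds < ∞. -/
open MeasureTheory Set

lemma dini_aux (ω : ℝ → ℝ) (M : ℝ)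
    (hω_cont : ContinuousOn ω (Set.Ici 0))
    (hM : ∀ t ∈ Set.Ici (0:ℝ), |ω t| ≤ M)
    (hω_int : IntegrableOn (fun s => ω s / s) (Set.Ioc (0:ℝ) 1))
    (c : ℝ) (hc : 1 ≤ c) :
    IntegrableOn (fun s => ω (c * s) / s) (Set.Ioc (0:ℝ) 1) ∧
    ∫ s in Set.Ioc (0:ℝ) 1, ω (c * s) / s ≤
      (∫ s in Set.Ioc (0:ℝ) 1, ω s / s) + M * Real.log c := by
  have hc0 : (0:ℝ) < c := lt_of_lt_of_le one_pos hc
  set g : ℝ → ℝ := fun u => ω u / u with hgdef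
  have hg2 : IntegrableOn g (Icc 1 c) := by
    apply ContinuousOn.integrableOn_Icc
    apply ContinuousOn.div (hω_cont.mono ?_) continuousOn_id ?_
    · intro x hx; exact le_trans zero_le_one hx.1
    · intro x hx; exact ne_of_gt (lt_of_lt_of_le zero_lt_one hx.1)
  have hgc : IntegrableOn g (Ioc 0 c) := by
    apply (hω_int.union hg2).mono_set
    intro x hx
    rcases le_or_gt x 1 with h | h
    · exact Or.inl ⟨hx.1, h⟩
    · exact Or.inr ⟨h.le, hx.2⟩
  have hiff : ∀ s : ℝ, c * s ∈ Ioc (0:ℝ) c ↔ s ∈ Ioc (0:ℝ) 1 := by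
    intro s
    constructor
    · rintro ⟨h1, h2⟩
      exact ⟨by nlinarith, by nlinarith⟩
    · rintro ⟨h1, h2⟩
      exact ⟨by nlinarith, by nlinarith⟩
  have hGind : (fun s => (Ioc (0:ℝ) c).indicator g (c * s))
      = (Ioc (0:ℝ) 1).indicator (fun s => g (c * s)) := by
    funext s
    by_cases hs : s ∈ Ioc (0:ℝ) 1
    · rw [indicator_of_mem hs, indicator_of_mem ((hiff s).2 hs)]
    · rw [indicator_of_notMem hs, indicator_of_notMem (fun h => hs ((hiff s).1 h))]
  have hint2 : IntegrableOn (fun s => g (c * s)) (Ioc (0:ℝ) 1) := by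
    have h := ((integrable_indicator_iff measurableSet_Ioc).2 hgc).comp_mul_left' hc0.ne'
    rw [show (fun x => (Ioc (0:ℝ) c).indicator g (c * x)) = (Ioc (0:ℝ) 1).indicator (fun s => g (c * s)) from hGind] at h
    exact (integrable_indicator_iff measurableSet_Ioc).1 h
  have heq : EqOn (fun s => c * g (c * s)) (fun s => ω (c * s) / s) (Ioc (0:ℝ) 1) := by
    intro s hs
    have hs0 : s ≠ 0 := ne_of_gt hs.1
    simp only [hgdef]
    field_simp
  have hint1 : IntegrableOn (fun s => ω (c * s) / s) (Ioc (0:ℝ) 1) :=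
    IntegrableOn.congr_fun (hint2.const_mul c) heq measurableSet_Ioc
  have hval : ∫ s in Ioc (0:ℝ) 1, ω (c * s) / s = ∫ u in Ioc (0:ℝ) c, g u := by
    rw [← setIntegral_congr_fun measurableSet_Ioc heq, integral_const_mul]
    have h1 : ∫ s in Ioc (0:ℝ) 1, g (c * s) = c⁻¹ * ∫ u in Ioc (0:ℝ) c, g u := by
      rw [← integral_indicator measurableSet_Ioc, ← hGind]
      beta_reduce
      rw [MeasureTheory.Measure.integral_comp_mul_left ((Ioc (0:ℝ) c).indicator g) c,
        integral_indicator measurableSet_Ioc, abs_of_pos (inv_pos.2 hc0), smul_eq_mul]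
    rw [h1]
    field_simp
  have hsplit : ∫ u in Ioc (0:ℝ) c, g u
      = (∫ u in Ioc (0:ℝ) 1, g u) + ∫ u in Ioc (1:ℝ) c, g u := by
    rw [← setIntegral_union (Ioc_disjoint_Ioc_of_le le_rfl) measurableSet_Ioc hω_int
      (hg2.mono_set Ioc_subset_Icc_self), Ioc_union_Ioc_eq_Ioc zero_le_one hc]
  have htail : ∫ u in Ioc (1:ℝ) c, g u ≤ M * Real.log c := by
    have hint3 : IntegrableOn (fun u => M * u⁻¹) (Ioc (1:ℝ) c) := by
      apply IntegrableOn.mono_set _ (Ioc_subset_Icc_self (a := (1:ℝ)) (b := c))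
      apply ContinuousOn.integrableOn_Icc
      exact continuousOn_const.mul (continuousOn_inv₀.mono
        (fun x hx => ne_of_gt (lt_of_lt_of_le zero_lt_one hx.1)))
    have h1 : ∫ u in Ioc (1:ℝ) c, g u ≤ ∫ u in Ioc (1:ℝ) c, M * u⁻¹ := by
      apply setIntegral_mono_on (hg2.mono_set Ioc_subset_Icc_self) hint3 measurableSet_Ioc
      intro u hu
      have hu0 : (0:ℝ) < u := lt_trans zero_lt_one hu.1
      rw [show M * u⁻¹ = M / u from (div_eq_mul_inv M u).symm, hgdef]
      exact (div_le_div_iff_of_pos_right hu0).2 (le_trans (le_abs_self _) (hM u (le_of_lt (lt_trans zero_lt_one hu.1))))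
    have h2 : ∫ u in Ioc (1:ℝ) c, M * u⁻¹ = M * Real.log c := by
      rw [integral_const_mul, ← intervalIntegral.integral_of_le hc,
        integral_inv_of_pos one_pos hc0, div_one]
    linarith
  rw [hval, hsplit] at *
  exact ⟨hint1, by linarith⟩

/-- If `ω` is a Dini function (bounded continuous increasing on `[0,∞)`, `ω 0 = 0`,
`∫₀¹ ω s / s ds < ∞`) and `a ∈ (0,1)`, `b > 1`, then `ω̃ t = ∑ aᵏ ω (bᵏ t)` is also a
Dini function. -/
theorem dini_series (ω : ℝ → ℝ) (a b : ℝ) (ha : a ∈ Set.Ioo (0:ℝ) 1) (hb : 1 < b)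
    (hω_cont : ContinuousOn ω (Set.Ici 0))
    (hω_mono : MonotoneOn ω (Set.Ici 0))
    (hω_nonneg : ∀ t ∈ Set.Ici (0:ℝ), 0 ≤ ω t)
    (hω_bdd : ∃ M : ℝ, ∀ t ∈ Set.Ici (0:ℝ), |ω t| ≤ M)
    (hω0 : ω 0 = 0)
    (hω_int : IntegrableOn (fun s => ω s / s) (Set.Ioc (0:ℝ) 1)) :
    (∀ t ∈ Set.Ici (0:ℝ), Summable (fun k : ℕ => a ^ k * ω (b ^ k * t))) ∧
    ContinuousOn (fun t => ∑' k : ℕ, a ^ k * ω (b ^ k * t)) (Set.Ici 0) ∧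
    MonotoneOn (fun t => ∑' k : ℕ, a ^ k * ω (b ^ k * t)) (Set.Ici 0) ∧
    (∃ M : ℝ, ∀ t ∈ Set.Ici (0:ℝ), |∑' k : ℕ, a ^ k * ω (b ^ k * t)| ≤ M) ∧
    (∑' k : ℕ, a ^ k * ω (b ^ k * (0:ℝ))) = 0 ∧
    IntegrableOn (fun s => (∑' k : ℕ, a ^ k * ω (b ^ k * s)) / s) (Set.Ioc (0:ℝ) 1) := by
  obtain ⟨ha0, ha1⟩ := ha
  obtain ⟨M, hM⟩ := hω_bdd
  have hb0 : (0:ℝ) < b := lt_trans zero_lt_one hb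
  have hbk : ∀ k : ℕ, (0:ℝ) ≤ b ^ k := fun k => pow_nonneg hb0.le k
  have hM0 : (0:ℝ) ≤ M := le_trans (abs_nonneg _) (hM 0 Set.self_mem_Ici)
  have hMa : Summable (fun k : ℕ => M * a ^ k) :=
    (summable_geometric_of_lt_one ha0.le ha1).mul_left M
  have hbound : ∀ (k : ℕ), ∀ t ∈ Set.Ici (0:ℝ), ‖a ^ k * ω (b ^ k * t)‖ ≤ M * a ^ k := by
    intro k t ht
    rw [norm_mul, norm_pow, Real.norm_eq_abs, Real.norm_eq_abs, abs_of_pos ha0, mul_comm]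
    exact mul_le_mul_of_nonneg_right (hM _ (mul_nonneg (hbk k) ht)) (pow_nonneg ha0.le k)
  have hsum : ∀ t ∈ Set.Ici (0:ℝ), Summable (fun k : ℕ => a ^ k * ω (b ^ k * t)) := by
    intro t ht
    exact Summable.of_norm_bounded hMa (fun k => hbound k t ht)
  have hcont : ContinuousOn (fun t => ∑' k : ℕ, a ^ k * ω (b ^ k * t)) (Set.Ici 0) := by
    apply continuousOn_tsum (u := fun k => M * a ^ k) ?_ hMa (fun k t ht => hbound k t ht)
    intro k
    apply continuousOn_const.mul
    exact hω_cont.comp (continuous_mul_left (b ^ k)).continuousOn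
      (fun t ht => mul_nonneg (hbk k) ht)
  have hmono : MonotoneOn (fun t => ∑' k : ℕ, a ^ k * ω (b ^ k * t)) (Set.Ici 0) := by
    intro x hx y hy hxy
    apply Summable.tsum_le_tsum _ (hsum x hx) (hsum y hy)
    intro k
    apply mul_le_mul_of_nonneg_left _ (pow_nonneg ha0.le k)
    exact hω_mono (mul_nonneg (hbk k) hx) (mul_nonneg (hbk k) hy)
      (mul_le_mul_of_nonneg_left hxy (hbk k))
  have hbdd : ∃ M' : ℝ, ∀ t ∈ Set.Ici (0:ℝ), |∑' k : ℕ, a ^ k * ω (b ^ k * t)| ≤ M' := by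
    refine ⟨M * (1 - a)⁻¹, fun t ht => ?_⟩
    have h1 : Summable fun k : ℕ => ‖a ^ k * ω (b ^ k * t)‖ :=
      Summable.of_nonneg_of_le (fun k => norm_nonneg _) (fun k => hbound k t ht) hMa
    calc |∑' k : ℕ, a ^ k * ω (b ^ k * t)| ≤ ∑' k : ℕ, ‖a ^ k * ω (b ^ k * t)‖ :=
          norm_tsum_le_tsum_norm h1
      _ ≤ ∑' k : ℕ, M * a ^ k := Summable.tsum_le_tsum (fun k => hbound k t ht) h1 hMa
      _ = M * (1 - a)⁻¹ := by
          rw [tsum_mul_left, tsum_geometric_of_lt_one ha0.le ha1]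
  have hzero : (∑' k : ℕ, a ^ k * ω (b ^ k * (0:ℝ))) = 0 := by
    simp [hω0]
  refine ⟨hsum, hcont, hmono, hbdd, hzero, ?_⟩
  -- integrability
  set C : ℝ := ∫ s in Set.Ioc (0:ℝ) 1, ω s / s with hC
  have hC0 : 0 ≤ C := setIntegral_nonneg measurableSet_Ioc
    (fun s hs => div_nonneg (hω_nonneg s hs.1.le) hs.1.le)
  have hlogb : 0 < Real.log b := Real.log_pos hb
  set B : ℕ → ℝ := fun k => a ^ k * (C + M * (k * Real.log b)) with hB
  have hB0 : ∀ k, 0 ≤ B k := by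
    intro k
    apply mul_nonneg (pow_nonneg ha0.le k)
    positivity
  have hBsum : Summable B := by
    have h1 : Summable (fun k : ℕ => C * a ^ k) :=
      (summable_geometric_of_lt_one ha0.le ha1).mul_left C
    have h2 : Summable (fun k : ℕ => (M * Real.log b) * ((k : ℝ) * a ^ k)) := by
      apply Summable.mul_left
      have := summable_pow_mul_geometric_of_norm_lt_one 1 (r := a)
        (by rw [Real.norm_eq_abs, abs_of_pos ha0]; exact ha1)
      simpa using this
    apply Summable.congr (h1.add h2)
    intro k
    simp only [hB]
    ring
  -- per-term facts
  have haux : ∀ k : ℕ, IntegrableOn (fun s => ω (b ^ k * s) / s) (Set.Ioc (0:ℝ) 1) ∧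
      ∫ s in Set.Ioc (0:ℝ) 1, ω (b ^ k * s) / s ≤ C + M * (k * Real.log b) := by
    intro k
    have h := dini_aux ω M hω_cont hM hω_int (b ^ k) (one_le_pow₀ hb.le)
    refine ⟨h.1, ?_⟩
    calc ∫ s in Set.Ioc (0:ℝ) 1, ω (b ^ k * s) / s ≤ C + M * Real.log (b ^ k) := h.2
      _ = C + M * (k * Real.log b) := by rw [Real.log_pow]
  set f : ℕ → ℝ → ℝ := fun k s => a ^ k * (ω (b ^ k * s) / s) with hf
  have hfint : ∀ k, IntegrableOn (f k) (Set.Ioc (0:ℝ) 1) := fun k => ((haux k).1).const_mul _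
  have hfnn : ∀ k, ∀ s ∈ Set.Ioc (0:ℝ) 1, 0 ≤ f k s := by
    intro k s hs
    exact mul_nonneg (pow_nonneg ha0.le k)
      (div_nonneg (hω_nonneg _ (mul_nonneg (hbk k) hs.1.le)) hs.1.le)
  have hfnorm : ∀ k, ∫ s in Set.Ioc (0:ℝ) 1, ‖f k s‖ ≤ B k := by
    intro k
    have h1 : ∫ s in Set.Ioc (0:ℝ) 1, ‖f k s‖ = ∫ s in Set.Ioc (0:ℝ) 1, f k s := by
      apply setIntegral_congr_fun measurableSet_Ioc
      intro s hs
      exact Real.norm_of_nonneg (hfnn k s hs)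
    rw [h1]
    have h2 : ∫ s in Set.Ioc (0:ℝ) 1, f k s
        = a ^ k * ∫ s in Set.Ioc (0:ℝ) 1, ω (b ^ k * s) / s := integral_const_mul _ _
    rw [h2, hB]
    exact mul_le_mul_of_nonneg_left (haux k).2 (pow_nonneg ha0.le k)
  -- measurability of the tsum
  have hmeas : AEStronglyMeasurable (fun s => (∑' k : ℕ, a ^ k * ω (b ^ k * s)) / s)
      (volume.restrict (Set.Ioc (0:ℝ) 1)) := by
    apply ContinuousOn.aestronglyMeasurable _ measurableSet_Ioc
    apply ContinuousOn.div (hcont.mono (fun x hx => hx.1.le)) continuousOn_id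
    intro s hs
    exact ne_of_gt hs.1
  refine ⟨hmeas, ?_⟩
  show (∫⁻ s, (‖(∑' k : ℕ, a ^ k * ω (b ^ k * s)) / s‖₊ : ENNReal) ∂(volume.restrict (Set.Ioc (0:ℝ) 1))) < ⊤
  calc ∫⁻ s, ‖(∑' k : ℕ, a ^ k * ω (b ^ k * s)) / s‖₊ ∂(volume.restrict (Set.Ioc (0:ℝ) 1))
      ≤ ∫⁻ s, ∑' k : ℕ, (‖f k s‖₊ : ENNReal) ∂(volume.restrict (Set.Ioc (0:ℝ) 1)) := by
        apply lintegral_mono_ae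
        filter_upwards [ae_restrict_mem measurableSet_Ioc] with s hs
        have hsum' : Summable (fun k : ℕ => f k s) := by
          apply Summable.congr ((hsum s hs.1.le).div_const s)
          intro k; simp only [hf]; ring
        have heq : (∑' k : ℕ, a ^ k * ω (b ^ k * s)) / s = ∑' k : ℕ, f k s := by
          rw [← tsum_div_const]
          apply tsum_congr
          intro k; simp only [hf]; ring
        rw [heq]
        have h1 : ‖∑' k : ℕ, f k s‖₊ ≤ ∑' k : ℕ, ‖f k s‖₊ := by
          apply nnnorm_tsum_le
          rw [← NNReal.summable_coe]
          exact hsum'.abs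
        calc (‖∑' k : ℕ, f k s‖₊ : ENNReal) ≤ ((∑' k : ℕ, ‖f k s‖₊ : NNReal) : ENNReal) := by
              exact_mod_cast h1
          _ = ∑' k : ℕ, (‖f k s‖₊ : ENNReal) := by
              rw [ENNReal.coe_tsum]
              rw [← NNReal.summable_coe]
              exact hsum'.abs
    _ = ∑' k : ℕ, ∫⁻ s, (‖f k s‖₊ : ENNReal) ∂(volume.restrict (Set.Ioc (0:ℝ) 1)) :=
        lintegral_tsum (fun k => (hfint k).aestronglyMeasurable.enorm)
    _ = ∑' k : ℕ, ENNReal.ofReal (∫ s in Set.Ioc (0:ℝ) 1, ‖f k s‖) := by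
        apply tsum_congr
        intro k
        exact (ofReal_integral_norm_eq_lintegral_enorm (hfint k)).symm
    _ ≤ ∑' k : ℕ, ENNReal.ofReal (B k) :=
        ENNReal.tsum_le_tsum (fun k => ENNReal.ofReal_le_ofReal (hfnorm k))
    _ = ENNReal.ofReal (∑' k, B k) := (ENNReal.ofReal_tsum_of_nonneg hB0 hBsum).symm
    _ < ⊤ := ENNReal.ofReal_lt_top
end

section
/- Let α ∈ (0,1), β ∈ (0,1) with α + β < 1, K > 0, and let f : ℝ → ℝ be bounded. For h > 0 define f_{β,h}(x) = h^{−β}(f(x+h) − f(x)). Suppose [f_{β,h}]_{C^α} ≤ K for every h > 0. Then f ∈ C^{α+β} and [f]_{C^{α+β}} ≤ N K, where N depends only on α+β. -/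
open Set

/-- If `f : ℝ → ℝ` is bounded, `α, β ∈ (0,1)` with `α + β = s < 1`, and the difference
quotients `f_{β,h}(x) = h^{-β} (f (x+h) - f x)` satisfy `[f_{β,h}]_{C^α} ≤ K` for every
`h > 0`, then `f ∈ C^{α+β}` with `[f]_{C^{α+β}} ≤ N K`, where `N = N(α+β)`. -/
theorem holder_from_difference_quotients (s : ℝ) (hs : s ∈ Set.Ioo (0:ℝ) 1) :
    ∃ N : ℝ, 0 < N ∧ ∀ (α β : ℝ), α ∈ Set.Ioo (0:ℝ) 1 → β ∈ Set.Ioo (0:ℝ) 1 →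
      α + β = s → ∀ (f : ℝ → ℝ) (K : ℝ), 0 < K →
      (∃ M : ℝ, ∀ x, |f x| ≤ M) →
      (∀ h : ℝ, 0 < h → ∀ x y : ℝ,
        |h ^ (-β) * (f (x + h) - f x) - h ^ (-β) * (f (y + h) - f y)| ≤ K * |x - y| ^ α) →
      ∀ x y : ℝ, |f x - f y| ≤ N * K * |x - y| ^ s := by
  obtain ⟨hs0, hs1⟩ := hs
  have h2s : (2:ℝ) ^ s < 2 := by
    calc (2:ℝ) ^ s < 2 ^ (1:ℝ) := by
          exact (Real.rpow_lt_rpow_left_iff (by norm_num)).mpr hs1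
    _ = 2 := Real.rpow_one 2
  have hden : 0 < 2 - (2:ℝ) ^ s := by linarith
  refine ⟨1 / (2 - 2 ^ s), by positivity, ?_⟩
  rintro α β ⟨hα0, hα1⟩ ⟨hβ0, hβ1⟩ hαβ f K hK ⟨M, hM⟩ hyp x y
  set c : ℝ := 1 / (2 - 2 ^ s) with hc
  have hc0 : 0 < c := by positivity
  have hM0 : 0 ≤ M := le_trans (abs_nonneg _) (hM 0)
  -- second difference bound
  have sd : ∀ (z h : ℝ), 0 < h →
      |(f (z + h) - f z) - (f (z + 2*h) - f (z + h))| ≤ K * h ^ s := by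
    intro z h hh
    have h1 := hyp h hh z (z + h)
    have e1 : |z - (z + h)| = h := by
      rw [abs_sub_comm]
      simp [abs_of_pos hh]
    rw [e1] at h1
    have e2 : z + h + h = z + 2*h := by ring
    rw [e2] at h1
    have hpow : (0:ℝ) < h ^ (-β) := Real.rpow_pos_of_pos hh _
    have h2 : h ^ (-β) * |(f (z + h) - f z) - (f (z + 2*h) - f (z + h))| ≤ K * h ^ α := by
      calc h ^ (-β) * |(f (z + h) - f z) - (f (z + 2*h) - f (z + h))|
          = |h ^ (-β) * (f (z + h) - f z) - h ^ (-β) * (f (z + 2*h) - f (z + h))| := by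
            rw [← mul_sub, abs_mul, abs_of_pos hpow]
        _ ≤ K * h ^ α := h1
    have hmul : h ^ β * (h ^ (-β) * |(f (z + h) - f z) - (f (z + 2*h) - f (z + h))|)
        ≤ h ^ β * (K * h ^ α) :=
      mul_le_mul_of_nonneg_left h2 (Real.rpow_nonneg hh.le _)
    have hcancel : h ^ β * h ^ (-β) = 1 := by
      rw [← Real.rpow_add hh]; simp
    calc |(f (z + h) - f z) - (f (z + 2*h) - f (z + h))|
        = h ^ β * (h ^ (-β) * |(f (z + h) - f z) - (f (z + 2*h) - f (z + h))|) := by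
          rw [← mul_assoc, hcancel, one_mul]
      _ ≤ h ^ β * (K * h ^ α) := hmul
      _ = K * h ^ s := by rw [← hαβ, Real.rpow_add hh]; ring
  -- main dyadic induction
  have main : ∀ n : ℕ, ∀ (z h : ℝ), 0 < h →
      |f (z + h) - f z| ≤ 2*M / 2^n + c * K * h ^ s := by
    intro n
    induction n with
    | zero =>
      intro z h hh
      have hb : |f (z + h) - f z| ≤ 2*M := by
        calc |f (z + h) - f z| ≤ |f (z + h)| + |f z| := abs_sub _ _
          _ ≤ M + M := add_le_add (hM _) (hM _)
          _ = 2*M := by ring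
      have hpos : 0 ≤ c * K * h ^ s := by positivity
      simpa using by linarith
    | succ n ih =>
      intro z h hh
      have ih2 : |f (z + 2*h) - f z| ≤ 2*M / 2^n + c * K * (2*h) ^ s :=
        ih z (2*h) (by linarith)
      have hsd := sd z h hh
      have key : 2 * |f (z + h) - f z| ≤ 2*M / 2^n + c * K * (2*h) ^ s + K * h ^ s := by
        have hid : 2 * (f (z + h) - f z)
            = (f (z + 2*h) - f z) + ((f (z + h) - f z) - (f (z + 2*h) - f (z + h))) := by
          ring
        calc 2 * |f (z + h) - f z| = |2 * (f (z + h) - f z)| := by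
              rw [abs_mul]; simp
          _ = |(f (z + 2*h) - f z) + ((f (z + h) - f z) - (f (z + 2*h) - f (z + h)))| := by
              rw [hid]
          _ ≤ |f (z + 2*h) - f z| + |(f (z + h) - f z) - (f (z + 2*h) - f (z + h))| :=
              abs_add_le _ _
          _ ≤ 2*M / 2^n + c * K * (2*h) ^ s + K * h ^ s := by linarith
      have hrw : c * K * (2*h) ^ s + K * h ^ s = 2 * (c * K * h ^ s) := by
        rw [Real.mul_rpow (by norm_num) hh.le]
        have hcs : c * (2:ℝ) ^ s + 1 = 2 * c := by
          have hc1 : c * (2 - (2:ℝ) ^ s) = 1 := by rw [hc]; exact one_div_mul_cancel hden.ne'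
          linear_combination -hc1
        linear_combination (K * h ^ s) * hcs
      have : 2 * |f (z + h) - f z| ≤ 2*M / 2^n + 2 * (c * K * h ^ s) := by
        rw [← hrw]; linarith
      have h2n : (2:ℝ)^(n+1) = 2 * 2^n := by ring
      rw [h2n]
      have hp : (0:ℝ) < 2^n := by positivity
      rw [div_mul_eq_div_div_swap]
      linarith
  -- take the limit in n
  have lim : ∀ (z h : ℝ), 0 < h → |f (z + h) - f z| ≤ c * K * h ^ s := by
    intro z h hh
    have ht : Filter.Tendsto (fun n : ℕ => 2*M / 2^n + c * K * h ^ s)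
        Filter.atTop (nhds (0 + c * K * h ^ s)) := by
      apply Filter.Tendsto.add _ tendsto_const_nhds
      have h0 : Filter.Tendsto (fun n : ℕ => ((1:ℝ)/2)^n) Filter.atTop (nhds 0) :=
        tendsto_pow_atTop_nhds_zero_of_lt_one (by norm_num) (by norm_num)
      have := h0.const_mul (2*M)
      simpa [div_pow, div_eq_mul_inv, mul_comm, mul_assoc] using this
    rw [zero_add] at ht
    exact ge_of_tendsto' ht (fun n => main n z h hh)
  rcases lt_trichotomy x y with hxy | hxy | hxy
  · have hh : 0 < y - x := by linarith
    have := lim x (y - x) hh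
    have e : x + (y - x) = y := by ring
    rw [e] at this
    have e2 : |x - y| = y - x := by rw [abs_sub_comm]; exact abs_of_pos hh
    rw [e2, abs_sub_comm]
    exact this
  · subst hxy
    simp [Real.zero_rpow hs0.ne']
  · have hh : 0 < x - y := by linarith
    have := lim y (x - y) hh
    have e : y + (x - y) = x := by ring
    rw [e] at this
    have e2 : |x - y| = x - y := abs_of_pos hh
    rw [e2]
    exact this
end

section
/- Let α ∈ (0,1), β = 1 − α, K > 0, γ ∈ (0,1), and let f : ℝ → ℝ be bounded with [f]_{C^γ} < ∞. For h > 0 define f_{β,h}(x) = h^{−β}(f(x+h) − f(x)), and suppose [f_{β,h}]_{C^α} ≤ K for every h > 0. Then for all x, y ∈ ℝ with 0 < |y| we have |f(x+y) − f(x)| ≤ N |y log|y|| K + N |y| [f]_{C^γ}, where N depends only on γ. -/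
open Set

set_option maxHeartbeats 1600000

/-- Borderline case `α + β = 1`: if `f : ℝ → ℝ` is bounded with `[f]_{C^γ} ≤ Cγ` and the
difference quotients `f_{β,h}` satisfy `[f_{β,h}]_{C^α} ≤ K` for all `h > 0` (with
`β = 1 - α`), then `|f (x+y) - f x| ≤ N |y log |y|| K + N |y| Cγ`, where `N = N(γ)`. -/
theorem log_lipschitz_from_difference_quotients (γ : ℝ) (hγ : γ ∈ Set.Ioo (0:ℝ) 1) :
    ∃ N : ℝ, 0 < N ∧ ∀ (α β : ℝ), α ∈ Set.Ioo (0:ℝ) 1 → β = 1 - α →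
      ∀ (f : ℝ → ℝ) (K Cγ : ℝ), 0 < K →
      (∃ M : ℝ, ∀ x, |f x| ≤ M) →
      (∀ x y : ℝ, |f x - f y| ≤ Cγ * |x - y| ^ γ) →
      (∀ h : ℝ, 0 < h → ∀ x y : ℝ,
        |h ^ (-β) * (f (x + h) - f x) - h ^ (-β) * (f (y + h) - f y)| ≤ K * |x - y| ^ α) →
      ∀ x y : ℝ, y ≠ 0 →
        |f (x + y) - f x| ≤ N * abs (y * Real.log (abs y)) * K + N * |y| * Cγ := by
  obtain ⟨hγ0, hγ1⟩ := hγ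
  refine ⟨2, by norm_num, ?_⟩
  rintro α β ⟨hα0, hα1⟩ hβ f K Cγ hK - hHol hq x y hy
  -- Cγ is nonnegative
  have hCγ : 0 ≤ Cγ := by
    have h1 := hHol 1 0
    have h2 : |(1:ℝ) - 0| ^ γ = 1 := by norm_num
    rw [h2, mul_one] at h1
    exact le_trans (abs_nonneg _) h1
  have hαβ : α + β = 1 := by rw [hβ]; ring
  -- second differences are bounded by K * s
  have hdiff : ∀ s : ℝ, 0 < s → ∀ z : ℝ,
      |(f (z + s + s) - f (z + s)) - (f (z + s) - f z)| ≤ K * s := by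
    intro s hs z
    have h1 := hq s hs (z + s) z
    have e0 : |z + s - z| = s := by rw [add_sub_cancel_left, abs_of_pos hs]
    rw [e0, ← mul_sub, abs_mul, abs_of_pos (Real.rpow_pos_of_pos hs (-β))] at h1
    have hβpos : (0:ℝ) < s ^ (β:ℝ) := Real.rpow_pos_of_pos hs _
    have h2 := mul_le_mul_of_nonneg_left h1 hβpos.le
    calc |(f (z + s + s) - f (z + s)) - (f (z + s) - f z)|
        = s ^ (β:ℝ) * (s ^ (-β) * |(f (z + s + s) - f (z + s)) - (f (z + s) - f z)|) := by
          rw [← mul_assoc, ← Real.rpow_add hs, add_neg_cancel, Real.rpow_zero, one_mul]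
      _ ≤ s ^ (β:ℝ) * (K * s ^ α) := h2
      _ = K * s ^ (β + α) := by rw [Real.rpow_add hs]; ring
      _ = K * s := by rw [show β + α = (1:ℝ) by linarith, Real.rpow_one]
  -- dyadic iteration
  have Q : ∀ n : ℕ, ∀ s : ℝ, 0 < s → ∀ z : ℝ,
      |f (z + s) - f z| ≤ Cγ * ((2 ^ n * s) ^ γ) / 2 ^ n + n * K * s / 2 := by
    intro n
    induction n with
    | zero =>
      intro s hs z
      have h1 := hHol (z + s) z
      have e0 : |z + s - z| = s := by rw [add_sub_cancel_left, abs_of_pos hs]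
      rw [e0] at h1
      simpa using h1
    | succ n ih =>
      intro s hs z
      have h2s : (0:ℝ) < 2 * s := by linarith
      have hA := ih (2 * s) h2s z
      have hB := hdiff s hs z
      have key : f (z + s) - f z
          = ((f (z + 2 * s) - f z)
            - ((f (z + s + s) - f (z + s)) - (f (z + s) - f z))) / 2 := by
        have e1 : z + 2 * s = z + s + s := by ring
        rw [e1]; ring
      rw [key, abs_div, abs_two]
      have habs : |(f (z + 2 * s) - f z)
            - ((f (z + s + s) - f (z + s)) - (f (z + s) - f z))|
          ≤ |f (z + 2 * s) - f z|
            + |(f (z + s + s) - f (z + s)) - (f (z + s) - f z)| := abs_sub _ _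
      have e2 : (2:ℝ) ^ n * (2 * s) = 2 ^ (n + 1) * s := by ring
      rw [e2] at hA
      have e3 : ((n:ℝ) + 1) * K * s / 2 = (n : ℝ) * K * s / 2 + K * s / 2 := by ring
      push_cast
      have hp : (0:ℝ) < (2:ℝ) ^ n := by positivity
      have hp1 : (0:ℝ) < (2:ℝ) ^ (n + 1) := by positivity
      have hnn : (0:ℝ) ≤ Cγ * ((2 ^ (n+1) * s) ^ γ) := by positivity
      rw [div_le_iff₀ (by norm_num : (0:ℝ) < 2)]
      calc |(f (z + 2 * s) - f z)
            - ((f (z + s + s) - f (z + s)) - (f (z + s) - f z))|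
          ≤ (Cγ * ((2 ^ (n+1) * s) ^ γ) / 2 ^ n + (n:ℝ) * K * (2 * s) / 2) + K * s :=
            le_trans habs (by linarith)
        _ = (Cγ * ((2 ^ (n+1) * s) ^ γ) / 2 ^ (n+1) + ((n:ℝ) + 1) * K * s / 2) * 2 := by
            field_simp; ring
  -- reduce to positive increment t = |y|
  set t : ℝ := |y| with ht_def
  have ht : 0 < t := abs_pos.mpr hy
  have main : ∀ z : ℝ, |f (z + t) - f z| ≤ 2 * (t * |Real.log t|) * K + 2 * t * Cγ := by
    intro z
    by_cases hhalf : t < 1 / 2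
    · -- small t: dyadic iteration
      have hlt1 : t < 1 := by linarith
      have hex : ∃ n : ℕ, 1 ≤ 2 ^ n * t := by
        obtain ⟨n, hn⟩ := pow_unbounded_of_one_lt (1 / t) (by norm_num : (1:ℝ) < 2)
        exact ⟨n, by rw [div_lt_iff₀ ht] at hn; linarith⟩
      obtain ⟨n₀, hn₀, hminall⟩ : ∃ n : ℕ, 1 ≤ 2 ^ n * t ∧ ∀ k < n, ¬ 1 ≤ 2 ^ k * t :=
        ⟨Nat.find hex, Nat.find_spec hex, fun k hk => Nat.find_min hex hk⟩
      have hn₀ne : n₀ ≠ 0 := by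
        intro h0
        rw [h0] at hn₀
        simp at hn₀
        linarith
      obtain ⟨m, hm⟩ : ∃ m, n₀ = m + 1 := ⟨n₀ - 1, (Nat.succ_pred_eq_of_pos (Nat.pos_of_ne_zero hn₀ne)).symm⟩
      have hmin : ¬ 1 ≤ 2 ^ m * t := hminall m (by omega)
      push_neg at hmin
      have hQ := Q n₀ t ht z
      -- first term bound
      have hb1 : (1:ℝ) ≤ 2 ^ n₀ * t := by exact_mod_cast hn₀
      have hbase : ((2:ℝ) ^ n₀ * t) ^ γ ≤ 2 ^ n₀ * t := by
        calc ((2:ℝ) ^ n₀ * t) ^ γ ≤ ((2:ℝ) ^ n₀ * t) ^ (1:ℝ) :=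
              Real.rpow_le_rpow_of_exponent_le hb1 hγ1.le
          _ = 2 ^ n₀ * t := Real.rpow_one _
      have hp : (0:ℝ) < (2:ℝ) ^ n₀ := by positivity
      have ht1 : Cγ * ((2 ^ n₀ * t) ^ γ) / 2 ^ n₀ ≤ Cγ * t := by
        rw [div_le_iff₀ hp]
        calc Cγ * ((2 ^ n₀ * t) ^ γ) ≤ Cγ * (2 ^ n₀ * t) :=
              mul_le_mul_of_nonneg_left hbase hCγ
          _ = Cγ * t * 2 ^ n₀ := by ring
      -- second term bound: n₀ ≤ 4 * (-log t)
      have hlogt : Real.log t < 0 := Real.log_neg ht hlt1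
      have hlog2 : (0.6931471803 : ℝ) < Real.log 2 := Real.log_two_gt_d9
      have hmt : (2:ℝ) ^ m * t < 1 := by exact_mod_cast hmin
      have h2m : (2:ℝ) ^ m < 1 / t := by
        rw [lt_div_iff₀ ht]; linarith
      have hlogm : (m : ℝ) * Real.log 2 < -Real.log t := by
        have := Real.log_lt_log (by positivity : (0:ℝ) < 2 ^ m) h2m
        rwa [Real.log_pow, one_div, Real.log_inv] at this
      have hlt2 : Real.log 2 < -Real.log t := by
        have : t < 2⁻¹ := by linarith
        have h := Real.log_lt_log ht this
        rw [Real.log_inv] at h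
        linarith
      have hn4 : (n₀ : ℝ) ≤ 4 * (-Real.log t) := by
        have : (n₀ : ℝ) * Real.log 2 < 2 * (-Real.log t) := by
          rw [hm]; push_cast; nlinarith
        nlinarith
      have habslog : |Real.log t| = -Real.log t := abs_of_neg hlogt
      have ht2 : (n₀ : ℝ) * K * t / 2 ≤ 2 * (t * |Real.log t|) * K := by
        rw [habslog]
        have h5 : (n₀ : ℝ) * (K * t) ≤ 4 * (-Real.log t) * (K * t) :=
          mul_le_mul_of_nonneg_right hn4 (le_of_lt (mul_pos hK ht))
        nlinarith [h5]
      calc |f (z + t) - f z| ≤ Cγ * ((2 ^ n₀ * t) ^ γ) / 2 ^ n₀ + n₀ * K * t / 2 := hQ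
        _ ≤ Cγ * t + 2 * (t * |Real.log t|) * K := by linarith
        _ ≤ 2 * (t * |Real.log t|) * K + 2 * t * Cγ := by nlinarith
    · -- large t: Hölder bound suffices
      push_neg at hhalf
      have h1 := hHol (z + t) z
      have e0 : |z + t - z| = t := by rw [add_sub_cancel_left, abs_of_pos ht]
      rw [e0] at h1
      have h2 : t ^ γ ≤ 2 * t := by
        rcases le_or_gt 1 t with h | h
        · calc t ^ γ ≤ t ^ (1:ℝ) := Real.rpow_le_rpow_of_exponent_le h hγ1.le
            _ = t := Real.rpow_one _
            _ ≤ 2 * t := by linarith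
        · calc t ^ γ ≤ 1 := Real.rpow_le_one ht.le h.le hγ0.le
            _ ≤ 2 * t := by linarith
      have h3 : (0:ℝ) ≤ 2 * (t * |Real.log t|) * K := by positivity
      calc |f (z + t) - f z| ≤ Cγ * t ^ γ := h1
        _ ≤ Cγ * (2 * t) := mul_le_mul_of_nonneg_left h2 hCγ
        _ ≤ 2 * (t * |Real.log t|) * K + 2 * t * Cγ := by linarith [h3]
  -- conclude, splitting on the sign of y
  have egoal : abs (y * Real.log (abs y)) = t * abs (Real.log t) := by
    rw [abs_mul, ← ht_def]
  rw [egoal]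
  rcases lt_or_gt_of_ne hy with hneg | hpos
  · have hty : t = -y := abs_of_neg hneg
    have h := main (x + y)
    rw [hty] at h
    simp only [add_neg_cancel_right] at h
    rw [abs_sub_comm] at h
    rw [hty]
    exact h
  · have hty : t = y := abs_of_pos hpos
    have h := main x
    rw [hty] at h
    rw [hty]
    exact h
end

section
/- Let α ∈ (0,1), β ∈ (0,1−α), and f : ℝ^d → ℝ be bounded. Suppose that for every nonzero h ∈ ℝ^d, the second difference bound sup_x |f(x+h) + f(x−h) − 2f(x)| ≤ K |h|^{α+β} holds with a constant K (this is a Zygmund-type bound of order α+β ∈ (0,1)). Then for every nonzero h, y ∈ ℝ^d with |h| ≥ |y|, one has sup_x |(T_h − 1)(T_y − 1)² f (x)| ≤ N |h|^β |y|^α (‖f‖_∞ + K), where N = N(α, β) and T_h is the shift operator. -/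
open Set

/-- The shift-difference operator `(T_h - 1) g (x) = g (x + h) - g x`. -/
noncomputable def shiftDiff {d : ℕ} (h : EuclideanSpace ℝ (Fin d))
    (g : EuclideanSpace ℝ (Fin d) → ℝ) : EuclideanSpace ℝ (Fin d) → ℝ :=
  fun x => g (x + h) - g x

/-- If `f` is bounded with Zygmund bound of order `α + β ∈ (0,1)`, then for `|h| ≥ |y|`,
`‖(T_h - 1)(T_y - 1)² f‖_∞ ≤ N |h|^β |y|^α (‖f‖_∞ + K)` with `N = N(α,β)`. -/
theorem mixed_difference_bound (d : ℕ) (α β : ℝ) (hα : α ∈ Set.Ioo (0:ℝ) 1)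
    (hβ : β ∈ Set.Ioo (0:ℝ) (1 - α)) :
    ∃ N : ℝ, 0 < N ∧ ∀ (f : EuclideanSpace ℝ (Fin d) → ℝ) (M K : ℝ), 0 ≤ M → 0 ≤ K →
      (∀ x, |f x| ≤ M) →
      (∀ h : EuclideanSpace ℝ (Fin d), h ≠ 0 →
        ∀ x, |f (x + h) + f (x - h) - 2 * f x| ≤ K * ‖h‖ ^ (α + β)) →
      ∀ (h y : EuclideanSpace ℝ (Fin d)), h ≠ 0 → y ≠ 0 → ‖y‖ ≤ ‖h‖ →
        ∀ x, |shiftDiff h (shiftDiff y (shiftDiff y f)) x|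
          ≤ N * ‖h‖ ^ β * ‖y‖ ^ α * (M + K) := by
  refine ⟨2, by norm_num, ?_⟩
  intro f M K hM hK hbdd hzyg h y hh hy hyh x
  have hyn : (0:ℝ) < ‖y‖ := norm_pos_iff.mpr hy
  -- the second symmetric difference bound for `(T_y - 1)² f`
  have key : ∀ z : EuclideanSpace ℝ (Fin d),
      |f (z + y + y) - 2 * f (z + y) + f z| ≤ K * ‖y‖ ^ (α + β) := by
    intro z
    have h1 := hzyg y hy (z + y)
    have e1 : z + y + y = z + y + y := rfl
    have e2 : z + y - y = z := by abel
    calc |f (z + y + y) - 2 * f (z + y) + f z|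
        = |f (z + y + y) + f (z + y - y) - 2 * f (z + y)| := by rw [e2]; ring_nf
      _ ≤ K * ‖y‖ ^ (α + β) := h1
  -- unfold and bound by two copies
  have expand : ∀ z : EuclideanSpace ℝ (Fin d),
      shiftDiff y (shiftDiff y f) z = f (z + y + y) - 2 * f (z + y) + f z := by
    intro z; simp only [shiftDiff]; ring
  have step : |shiftDiff h (shiftDiff y (shiftDiff y f)) x|
      ≤ 2 * (K * ‖y‖ ^ (α + β)) := by
    show |shiftDiff y (shiftDiff y f) (x + h) - shiftDiff y (shiftDiff y f) x|
        ≤ 2 * (K * ‖y‖ ^ (α + β))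
    rw [expand, expand]
    calc |f (x + h + y + y) - 2 * f (x + h + y) + f (x + h)
            - (f (x + y + y) - 2 * f (x + y) + f x)|
        ≤ |f (x + h + y + y) - 2 * f (x + h + y) + f (x + h)|
            + |f (x + y + y) - 2 * f (x + y) + f x| := abs_sub _ _
      _ ≤ K * ‖y‖ ^ (α + β) + K * ‖y‖ ^ (α + β) :=
          add_le_add (key (x + h)) (key x)
      _ = 2 * (K * ‖y‖ ^ (α + β)) := by ring
  -- compare exponents
  have hsplit : ‖y‖ ^ (α + β) = ‖y‖ ^ α * ‖y‖ ^ β :=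
    Real.rpow_add hyn α β
  have hmono : ‖y‖ ^ β ≤ ‖h‖ ^ β :=
    Real.rpow_le_rpow (le_of_lt hyn) hyh (le_of_lt hβ.1)
  have hya : (0:ℝ) ≤ ‖y‖ ^ α := Real.rpow_nonneg (norm_nonneg y) α
  calc |shiftDiff h (shiftDiff y (shiftDiff y f)) x|
      ≤ 2 * (K * ‖y‖ ^ (α + β)) := step
    _ = 2 * K * (‖y‖ ^ α * ‖y‖ ^ β) := by rw [hsplit]; ring
    _ ≤ 2 * K * (‖y‖ ^ α * ‖h‖ ^ β) := by
        apply mul_le_mul_of_nonneg_left (mul_le_mul_of_nonneg_left hmono hya)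
        positivity
    _ ≤ 2 * ‖h‖ ^ β * ‖y‖ ^ α * (M + K) := by
        have hhb : (0:ℝ) ≤ ‖h‖ ^ β := Real.rpow_nonneg (norm_nonneg h) β
        nlinarith [mul_nonneg hhb hya, mul_nonneg (mul_nonneg hhb hya) hM]
end

section
/- Summability of dyadic mean oscillations: Let σ > 0 and let u ∈ L¹(ℝ^d, ω) with weight ω(x) = 1/(1+|x|^{d+σ}). Then Σ_{k=1}^∞ 2^{−kσ} ⨍_{B_{2^k}} |u − (u)_{B_{2^k}}| dx ≤ N(d,σ) ‖u‖_{L¹(ℝ^d, ω)}, so in particular the series converges. -/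
open MeasureTheory

section Aux
open Finset Real

lemma geom_tail_sum' {r : ℝ} (hr0 : 0 ≤ r) (hr1 : r < 1) (n : ℕ) :
    ∑ i ∈ range n, r ^ i ≤ (1 - r)⁻¹ := by
  have h1 : (0:ℝ) < 1 - r := by linarith
  rw [geom_sum_eq (by linarith : r ≠ 1) n]
  rw [div_le_iff_of_neg (by linarith : r - 1 < 0)]
  have : 0 ≤ r ^ n := pow_nonneg hr0 n
  have : (1-r)⁻¹ * (1-r) = 1 := inv_mul_cancel₀ (by linarith)
  nlinarith [inv_nonneg.2 h1.le]

lemma core_sum_bound (β : ℝ) (hβ : 0 < β) (t : ℝ) (ht : 0 ≤ t) (n : ℕ) :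
    (1 + t ^ β) * ∑ k ∈ range n,
      ((((2:ℝ) ^ β)⁻¹) ^ (k+1)) * (if t < 2 ^ (k+1) then (1:ℝ) else 0)
      ≤ (1 + 2 ^ β) * (1 - ((2:ℝ) ^ β)⁻¹)⁻¹ := by
  have h2β : (1:ℝ) < 2 ^ β := by
    rw [Real.one_lt_rpow_iff (by norm_num)]; exact Or.inl ⟨one_lt_two, hβ⟩
  set r : ℝ := ((2:ℝ) ^ β)⁻¹ with hr
  have hr0 : 0 < r := inv_pos.2 (by linarith)
  have hr1 : r < 1 := inv_lt_one_of_one_lt₀ h2β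
  have h2pow : ∀ j : ℕ, ((2:ℝ) ^ j) ^ β = ((2:ℝ) ^ β) ^ j := by
    intro j
    rw [← Real.rpow_natCast (2:ℝ) j, ← Real.rpow_natCast ((2:ℝ)^β) j,
      ← Real.rpow_mul (by norm_num), ← Real.rpow_mul (by norm_num), mul_comm]
  classical
  have hex : ∃ m : ℕ, t < 2 ^ (m+1) := by
    obtain ⟨m, hm⟩ := pow_unbounded_of_one_lt t (one_lt_two (α := ℝ))
    exact ⟨m, lt_of_lt_of_le hm (pow_le_pow_right₀ one_le_two (Nat.le_succ m))⟩
  obtain ⟨m, hmspec, hmin⟩ : ∃ m : ℕ, t < 2 ^ (m+1) ∧ ∀ k < m, ¬ t < 2 ^ (k+1) :=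
    ⟨Nat.find hex, Nat.find_spec hex, fun k hk => Nat.find_min hex hk⟩
  have hmask : ∀ k ∈ range n, (r ^ (k+1)) * (if t < 2 ^ (k+1) then (1:ℝ) else 0)
      ≤ if m ≤ k then r ^ (k+1) else 0 := by
    intro k _
    by_cases h : t < 2 ^ (k+1)
    · have hmk : m ≤ k := by
        by_contra hc; exact hmin k (by omega) h
      simp [h, hmk]
    · simp only [h, if_false, mul_zero]
      split <;> positivity
  have hsum1 : ∑ k ∈ range n, (r ^ (k+1)) * (if t < 2 ^ (k+1) then (1:ℝ) else 0)
      ≤ r ^ (m+1) * (1 - r)⁻¹ := by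
    calc ∑ k ∈ range n, (r ^ (k+1)) * (if t < 2 ^ (k+1) then (1:ℝ) else 0)
        ≤ ∑ k ∈ range n, (if m ≤ k then r ^ (k+1) else 0) := Finset.sum_le_sum hmask
      _ = ∑ k ∈ Finset.Ico m n, r ^ (k+1) := by
          rw [← Finset.sum_filter]
          congr 1
          ext k
          simp only [Finset.mem_filter, Finset.mem_range, Finset.mem_Ico]
          omega
      _ = ∑ j ∈ range (n - m), r ^ (m + j + 1) := Finset.sum_Ico_eq_sum_range _ _ _
      _ = r ^ (m+1) * ∑ j ∈ range (n - m), r ^ j := by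
          rw [Finset.mul_sum]; congr 1; ext j; ring
      _ ≤ r ^ (m+1) * (1 - r)⁻¹ :=
          mul_le_mul_of_nonneg_left (geom_tail_sum' hr0.le hr1 _) (by positivity)
  have hfactor : (1 + t ^ β) * r ^ (m+1) ≤ 1 + 2 ^ β := by
    rcases Nat.eq_zero_or_pos m with hm0 | hmpos
    · have htβ : t ^ β ≤ 2 ^ β :=
        Real.rpow_le_rpow ht (by rw [hm0] at hmspec; simpa using hmspec.le) hβ.le
      rw [hm0, pow_one]
      have : (1 + t ^ β) * r ≤ (1 + 2 ^ β) * 1 :=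
        mul_le_mul (by linarith) hr1.le hr0.le (by positivity)
      simpa using this
    · have hge : (2:ℝ) ^ m ≤ t := by
        have := hmin (m-1) (by omega)
        push_neg at this
        have hmm : (m - 1) + 1 = m := by omega
        rwa [hmm] at this
      have h1t : (1:ℝ) ≤ t := le_trans (one_le_pow₀ one_le_two) hge
      have h1tβ : (1:ℝ) ≤ t ^ β := Real.one_le_rpow h1t hβ.le
      have hrm : r ^ (m+1) ≤ (t ^ β)⁻¹ := by
        rw [hr, inv_pow]
        apply inv_anti₀ (by linarith)
        rw [← h2pow]
        exact Real.rpow_le_rpow ht hmspec.le hβ.le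
      calc (1 + t ^ β) * r ^ (m+1) ≤ (1 + t ^ β) * (t ^ β)⁻¹ :=
            mul_le_mul_of_nonneg_left hrm (by positivity)
        _ = (t ^ β)⁻¹ + 1 := by field_simp
        _ ≤ 1 + 1 := by
            have : (t ^ β)⁻¹ ≤ 1 := inv_le_one_of_one_le₀ h1tβ
            linarith
        _ ≤ 1 + 2 ^ β := by linarith
  calc (1 + t ^ β) * ∑ k ∈ range n, (r ^ (k+1)) * (if t < 2 ^ (k+1) then (1:ℝ) else 0)
      ≤ (1 + t ^ β) * (r ^ (m+1) * (1 - r)⁻¹) :=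
        mul_le_mul_of_nonneg_left hsum1 (by positivity)
    _ = ((1 + t ^ β) * r ^ (m+1)) * (1 - r)⁻¹ := by ring
    _ ≤ (1 + 2 ^ β) * (1 - r)⁻¹ := by
        apply mul_le_mul_of_nonneg_right hfactor
        rw [inv_nonneg]; linarith

-- oscillation average bound
lemma osc_avg_le {α : Type*} [MeasurableSpace α] (μ : Measure α) (s : Set α) (f : α → ℝ)
    (hμ0 : (μ s).toReal ≠ 0)
    (hf : IntegrableOn (fun x => |f x|) s μ) :
    ⨍ x in s, |f x - ⨍ y in s, f y ∂μ| ∂μ ≤ 2 * ⨍ x in s, |f x| ∂μ := by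
  have havgabs : 0 ≤ ⨍ x in s, |f x| ∂μ := integral_nonneg fun x => abs_nonneg _
  by_cases hi : IntegrableOn f s μ
  · set m := ⨍ y in s, f y ∂μ with hm
    have hV : (0:ℝ) < (μ s).toReal := lt_of_le_of_ne ENNReal.toReal_nonneg (Ne.symm hμ0)
    have hmbound : |m| ≤ ((μ s).toReal)⁻¹ * ∫ x in s, |f x| ∂μ := by
      rw [hm, setAverage_eq, smul_eq_mul, abs_mul, abs_inv, abs_of_nonneg measureReal_nonneg, measureReal_def]
      apply mul_le_mul_of_nonneg_left _ (by positivity)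
      simpa using norm_integral_le_integral_norm (μ := μ.restrict s) f
    have h1 : ∫ x in s, |f x - m| ∂μ ≤ ∫ x in s, (|f x| + |m|) ∂μ := by
      apply integral_mono ((hi.sub (integrableOn_const (LT.lt.ne (by
        exact lt_of_le_of_ne le_top (by
          intro h; rw [h] at hμ0; simp at hμ0)))) ).abs) (hf.add (integrableOn_const (LT.lt.ne (by
        exact lt_of_le_of_ne le_top (by
          intro h; rw [h] at hμ0; simp at hμ0)))))
      intro x
      exact abs_sub _ _
    have h2 : ∫ x in s, (|f x| + |m|) ∂μ = (∫ x in s, |f x| ∂μ) + (μ s).toReal * |m| := by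
      rw [integral_add hf (integrableOn_const (LT.lt.ne (lt_of_le_of_ne le_top (by
        intro h; rw [h] at hμ0; simp at hμ0)))), setIntegral_const, smul_eq_mul, measureReal_def]
    rw [setAverage_eq, setAverage_eq, smul_eq_mul, smul_eq_mul]
    calc ((μ s).toReal)⁻¹ * ∫ x in s, |f x - m| ∂μ
        ≤ ((μ s).toReal)⁻¹ * ((∫ x in s, |f x| ∂μ) + (μ s).toReal * |m|) := by
          apply mul_le_mul_of_nonneg_left _ (by positivity)
          rw [← h2]; exact h1
      _ ≤ ((μ s).toReal)⁻¹ * ((∫ x in s, |f x| ∂μ) + (μ s).toReal *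
            (((μ s).toReal)⁻¹ * ∫ x in s, |f x| ∂μ)) := by
          apply mul_le_mul_of_nonneg_left _ (by positivity)
          have := mul_le_mul_of_nonneg_left hmbound hV.le
          linarith
      _ = 2 * (((μ s).toReal)⁻¹ * ∫ x in s, |f x| ∂μ) := by
          field_simp
          ring
  · have hm0 : (⨍ y in s, f y ∂μ) = 0 := by
      rw [setAverage_eq, integral_undef hi, smul_zero]
    rw [hm0]
    simp only [sub_zero]
    linarith


end Aux
open Finset Real

/-- Summability of dyadic mean oscillations: if `u ∈ L¹(ℝ^d, ω)` with weight
`ω(x) = 1/(1 + |x|^{d+σ})`, then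
`∑_{k≥1} 2^{-kσ} ⨍_{B_{2^k}} |u - (u)_{B_{2^k}}| ≤ N(d,σ) ‖u‖_{L¹(ω)}`. -/
theorem dyadic_mean_oscillation_summable (d : ℕ) (hd : 0 < d) (σ : ℝ) (hσ : 0 < σ) :
    ∃ N : ℝ, 0 < N ∧ ∀ u : EuclideanSpace ℝ (Fin d) → ℝ,
      Integrable (fun x => |u x| * (1 + ‖x‖ ^ ((d:ℝ) + σ))⁻¹) →
      Summable (fun k : ℕ => (2:ℝ) ^ (-((k:ℝ) + 1) * σ) *
        ⨍ x in Metric.ball (0:EuclideanSpace ℝ (Fin d)) ((2:ℝ) ^ (k + 1)),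
          |u x - ⨍ y in Metric.ball (0:EuclideanSpace ℝ (Fin d)) ((2:ℝ) ^ (k + 1)), u y|) ∧
      (∑' k : ℕ, (2:ℝ) ^ (-((k:ℝ) + 1) * σ) *
        ⨍ x in Metric.ball (0:EuclideanSpace ℝ (Fin d)) ((2:ℝ) ^ (k + 1)),
          |u x - ⨍ y in Metric.ball (0:EuclideanSpace ℝ (Fin d)) ((2:ℝ) ^ (k + 1)), u y|)
        ≤ N * ∫ x, |u x| * (1 + ‖x‖ ^ ((d:ℝ) + σ))⁻¹ := by
  classical
  haveI : Nonempty (Fin d) := ⟨⟨0, hd⟩⟩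
  set β : ℝ := (d:ℝ) + σ with hβdef
  have hβ : 0 < β := by positivity
  have h2β : (1:ℝ) < 2 ^ β := by
    rw [Real.one_lt_rpow_iff (by norm_num)]; exact Or.inl ⟨one_lt_two, hβ⟩
  set r : ℝ := ((2:ℝ) ^ β)⁻¹ with hrdef
  have hr0 : 0 < r := inv_pos.2 (by linarith)
  have hr1 : r < 1 := inv_lt_one_of_one_lt₀ h2β
  -- volume of unit ball
  set v : ℝ := (volume (Metric.ball (0:EuclideanSpace ℝ (Fin d)) 1)).toReal with hvdef
  have hv0 : 0 < v :=
    ENNReal.toReal_pos (Metric.measure_ball_pos _ _ one_pos).ne' measure_ball_lt_top.ne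
  set C : ℝ := (1 + 2 ^ β) * (1 - r)⁻¹ with hCdef
  have hC0 : 0 < C := by
    apply mul_pos (by linarith) (inv_pos.2 (by linarith))
  set N : ℝ := (2 / v) * C with hNdef
  have hN0 : 0 < N := mul_pos (by positivity) hC0
  refine ⟨N, hN0, fun u hu => ?_⟩
  set w : EuclideanSpace ℝ (Fin d) → ℝ := fun x => (1 + ‖x‖ ^ β)⁻¹ with hwdef
  set B : ℕ → Set (EuclideanSpace ℝ (Fin d)) := fun k => Metric.ball (0:EuclideanSpace ℝ (Fin d)) ((2:ℝ) ^ (k+1)) with hBdef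
  have hwpos : ∀ x : EuclideanSpace ℝ (Fin d), 0 < 1 + ‖x‖ ^ β := by
    intro x; have := Real.rpow_nonneg (norm_nonneg x) β; linarith
  -- volumes
  have hvol : ∀ k : ℕ, (volume (B k)).toReal = ((2:ℝ) ^ (k+1)) ^ d * v := by
    intro k
    rw [show B k = Metric.ball (0:EuclideanSpace ℝ (Fin d)) ((2:ℝ)^(k+1)) from rfl]
    rw [Measure.addHaar_ball volume (0:EuclideanSpace ℝ (Fin d)) (by positivity : (0:ℝ) ≤ (2:ℝ)^(k+1))]
    rw [ENNReal.toReal_mul, ENNReal.toReal_ofReal (by positivity)]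
    congr 2
    simp [finrank_euclideanSpace_fin]
  have hvolpos : ∀ k : ℕ, 0 < (volume (B k)).toReal := by
    intro k; rw [hvol k]; positivity
  -- measurability of |u|
  have hcont : Continuous fun x : EuclideanSpace ℝ (Fin d) => 1 + ‖x‖ ^ β :=
    continuous_const.add (continuous_norm.rpow_const fun x => Or.inr hβ.le)
  have humeas : AEStronglyMeasurable (fun x => |u x|) (volume : Measure (EuclideanSpace ℝ (Fin d))) := by
    refine (hu.aestronglyMeasurable.mul hcont.aestronglyMeasurable).congr ?_
    filter_upwards with x
    simp only [Pi.mul_apply]; field_simp [(hwpos x).ne']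
  -- integrability of |u| on balls
  have hIntBall : ∀ k : ℕ, IntegrableOn (fun x => |u x|) (B k) volume := by
    intro k
    have hG : Integrable (fun x => (1 + ((2:ℝ)^(k+1)) ^ β) * (|u x| * (1 + ‖x‖ ^ β)⁻¹))
        (volume.restrict (B k)) := (hu.restrict (s := B k)).const_mul _
    refine hG.mono' humeas.restrict ?_
    rw [ae_restrict_iff' measurableSet_ball]
    filter_upwards with x hx
    have hxn : ‖x‖ < (2:ℝ)^(k+1) := by
      simpa [mem_ball_zero_iff] using hx
    have h2 : ‖x‖ ^ β ≤ ((2:ℝ)^(k+1)) ^ β :=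
      Real.rpow_le_rpow (norm_nonneg x) hxn.le hβ.le
    have h1 := hwpos x
    rw [Real.norm_eq_abs, abs_abs]
    calc |u x| = (|u x| * (1 + ‖x‖ ^ β)⁻¹) * (1 + ‖x‖ ^ β) := by field_simp
      _ ≤ (|u x| * (1 + ‖x‖ ^ β)⁻¹) * (1 + ((2:ℝ)^(k+1)) ^ β) := by
          apply mul_le_mul_of_nonneg_left (by linarith) (by positivity)
      _ = (1 + ((2:ℝ)^(k+1)) ^ β) * (|u x| * (1 + ‖x‖ ^ β)⁻¹) := mul_comm _ _
  -- constant identity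
  have hconst : ∀ k : ℕ, (2:ℝ) ^ (-((k:ℝ)+1)*σ) * (2 * ((volume (B k)).toReal)⁻¹)
      = (2/v) * r^(k+1) := by
    intro k
    have e1 : (((2:ℝ)^(k+1) : ℝ))^d = (2:ℝ) ^ (((k:ℝ)+1) * d) := by
      rw [← Real.rpow_natCast (2:ℝ) (k+1), ← Real.rpow_natCast ((2:ℝ)^(((k+1:ℕ)):ℝ)) d,
        ← Real.rpow_mul (by norm_num)]
      push_cast
      ring_nf
    have e2 : r ^ (k+1) = (2:ℝ)^(-((k:ℝ)+1)*σ) * ((2:ℝ)^(((k:ℝ)+1)*d))⁻¹ := by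
      rw [hrdef, inv_pow, ← Real.rpow_natCast ((2:ℝ)^β) (k+1), ← Real.rpow_mul (by norm_num)]
      rw [← Real.rpow_neg (by norm_num) (((k:ℝ)+1)*d), ← Real.rpow_add (by norm_num)]
      rw [← Real.rpow_neg (by norm_num)]
      congr 1
      rw [hβdef]
      push_cast
      ring
    have e3 : (0:ℝ) < (2:ℝ)^(((k:ℝ)+1)*d) := Real.rpow_pos_of_pos (by norm_num) _
    have e4 : (0:ℝ) < (2:ℝ)^(-((k:ℝ)+1)*σ) := Real.rpow_pos_of_pos (by norm_num) _
    rw [hvol k, e1, e2]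
    field_simp
  -- per-term bound
  have hterm : ∀ k : ℕ,
      (2:ℝ) ^ (-((k:ℝ)+1)*σ) * ⨍ x in B k, |u x - ⨍ y in B k, u y|
        ≤ ((2/v) * r^(k+1)) * ∫ x in B k, |u x| := by
    intro k
    have hosc := osc_avg_le volume (B k) u (hvolpos k).ne' (hIntBall k)
    have havg : ⨍ x in B k, |u x| = ((volume (B k)).toReal)⁻¹ * ∫ x in B k, |u x| := by
      rw [setAverage_eq, smul_eq_mul, measureReal_def]
    have h0 : (0:ℝ) ≤ (2:ℝ)^(-((k:ℝ)+1)*σ) := (Real.rpow_pos_of_pos (by norm_num) _).le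
    calc (2:ℝ) ^ (-((k:ℝ)+1)*σ) * ⨍ x in B k, |u x - ⨍ y in B k, u y|
        ≤ (2:ℝ) ^ (-((k:ℝ)+1)*σ) * (2 * ⨍ x in B k, |u x|) :=
          mul_le_mul_of_nonneg_left hosc h0
      _ = ((2:ℝ) ^ (-((k:ℝ)+1)*σ) * (2 * ((volume (B k)).toReal)⁻¹)) * ∫ x in B k, |u x| := by
          rw [havg]; ring
      _ = ((2/v) * r^(k+1)) * ∫ x in B k, |u x| := by rw [hconst k]
  -- nonnegativity of terms
  have htermnn : ∀ k : ℕ, 0 ≤ (2:ℝ) ^ (-((k:ℝ)+1)*σ) * ⨍ x in B k, |u x - ⨍ y in B k, u y| :=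
    fun k => mul_nonneg (Real.rpow_pos_of_pos (by norm_num) _).le
      (integral_nonneg fun x => abs_nonneg _)
  -- partial sum bound
  have hpartial : ∀ n : ℕ,
      ∑ k ∈ range n, ((2/v) * r^(k+1)) * ∫ x in B k, |u x|
        ≤ N * ∫ x, |u x| * (1 + ‖x‖ ^ β)⁻¹ := by
    intro n
    have hIndInt : ∀ k ∈ range n,
        Integrable ((B k).indicator (fun y => ((2/v) * r^(k+1)) * |u y|)) volume :=
      fun k _ => (integrable_indicator_iff measurableSet_ball).2 ((hIntBall k).const_mul _)
    have hswap : ∑ k ∈ range n, ((2/v) * r^(k+1)) * ∫ x in B k, |u x|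
        = ∫ x, ∑ k ∈ range n, (B k).indicator (fun y => ((2/v) * r^(k+1)) * |u y|) x := by
      rw [integral_finset_sum _ hIndInt]
      apply Finset.sum_congr rfl
      intro k _
      rw [integral_indicator measurableSet_ball, integral_const_mul]
    rw [hswap]
    have hptw : ∀ x : EuclideanSpace ℝ (Fin d),
        ∑ k ∈ range n, (B k).indicator (fun y => ((2/v) * r^(k+1)) * |u y|) x
          ≤ N * (|u x| * (1 + ‖x‖ ^ β)⁻¹) := by
      intro x
      have h1 := hwpos x
      have hcore := core_sum_bound β hβ ‖x‖ (norm_nonneg x) n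
      have hS : ∑ k ∈ range n, (r^(k+1)) * (if ‖x‖ < 2^(k+1) then (1:ℝ) else 0)
          ≤ C * (1 + ‖x‖ ^ β)⁻¹ := by
        rw [← hrdef] at hcore
        rw [← le_div_iff₀' h1] at hcore
        rw [hCdef]
        calc ∑ k ∈ range n, (r^(k+1)) * (if ‖x‖ < 2^(k+1) then (1:ℝ) else 0)
            ≤ (1 + 2^β) * (1-r)⁻¹ / (1 + ‖x‖^β) := hcore
          _ = (1 + 2^β) * (1-r)⁻¹ * (1 + ‖x‖^β)⁻¹ := by rw [div_eq_mul_inv]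
      calc ∑ k ∈ range n, (B k).indicator (fun y => ((2/v) * r^(k+1)) * |u y|) x
          = (2/v) * |u x| * ∑ k ∈ range n, (r^(k+1)) * (if ‖x‖ < 2^(k+1) then (1:ℝ) else 0) := by
            rw [Finset.mul_sum]
            apply Finset.sum_congr rfl
            intro k _
            rw [Set.indicator_apply]
            by_cases h : x ∈ B k
            · have hx : ‖x‖ < 2^(k+1) := by
                have h' : x ∈ Metric.ball (0:EuclideanSpace ℝ (Fin d)) ((2:ℝ)^(k+1)) := h
                simpa [mem_ball_zero_iff] using h'
              rw [if_pos h, if_pos hx]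
              ring
            · have hx : ¬ ‖x‖ < 2^(k+1) := by
                intro hc
                exact h (by simpa [hBdef, mem_ball_zero_iff] using hc)
              rw [if_neg h, if_neg hx]
              ring
        _ ≤ (2/v) * |u x| * (C * (1 + ‖x‖^β)⁻¹) := by
            apply mul_le_mul_of_nonneg_left hS (by positivity)
        _ = N * (|u x| * (1 + ‖x‖ ^ β)⁻¹) := by rw [hNdef]; ring
    calc ∫ x, ∑ k ∈ range n, (B k).indicator (fun y => ((2/v) * r^(k+1)) * |u y|) x
        ≤ ∫ x, N * (|u x| * (1 + ‖x‖ ^ β)⁻¹) := by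
          apply integral_mono (integrable_finset_sum _ hIndInt) (hu.const_mul N) hptw
      _ = N * ∫ x, |u x| * (1 + ‖x‖ ^ β)⁻¹ := integral_const_mul _ _
  have hsumle : ∀ n : ℕ,
      ∑ k ∈ range n, (2:ℝ) ^ (-((k:ℝ)+1)*σ) * ⨍ x in B k, |u x - ⨍ y in B k, u y|
        ≤ N * ∫ x, |u x| * (1 + ‖x‖ ^ β)⁻¹ := by
    intro n
    exact le_trans (Finset.sum_le_sum fun k _ => hterm k) (hpartial n)
  have hsummable : Summable (fun k : ℕ => (2:ℝ) ^ (-((k:ℝ)+1)*σ) *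
      ⨍ x in B k, |u x - ⨍ y in B k, u y|) :=
    summable_of_sum_range_le htermnn hsumle
  exact ⟨hsummable, Summable.tsum_le_of_sum_range_le hsummable hsumle⟩
end

section
/- Dyadic iteration lemma: Let (M_l)_{l ∈ ℤ} be a bounded sequence of nonnegative reals, ω̃ a nonnegative increasing function, σ > 0, and suppose there exist constants N₀ > 0 and α₀ > 0 such that for every integer s ≥ 1 and every l ∈ ℤ, M_l ≤ N₀ 2^{sd/2} ω̃(2^{1+s+l}) + N₀ 2^{−sα₀} Σ_{k=1}^∞ 2^{−kσ} M_{k+s+l}. Then, defining M̃_l = Σ_{j=0}^∞ 2^{−jσ/2} M_{l+j} (assumed finite and bounded in l) and ω̃̃(t) = Σ_{j=0}^∞ 2^{−jσ/2} ω̃(2^j t), there exists a fixed integer s (depending on N₀, α₀, σ, d) such that for every l ∈ ℤ, M_l ≤ N Σ_{j=1}^∞ 2^{−j} ω̃̃(2^{1+js+l}) for a constant N. -/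
open Filter Topology

private lemma two_rpow_neg_nat_mul (a : ℝ) (n : ℕ) :
    (2:ℝ) ^ (-(n:ℝ) * a) = ((2:ℝ) ^ (-a)) ^ n := by
  have h : -(n:ℝ) * a = (-a) * (n:ℝ) := by ring
  rw [h, Real.rpow_mul (by norm_num : (0:ℝ) ≤ 2), Real.rpow_natCast]

set_option maxHeartbeats 1200000 in
/-- Dyadic iteration lemma underlying the Dini-continuity proof: if a bounded nonnegative
sequence `(M_l)_{l ∈ ℤ}` satisfies, for every `s ≥ 1` and `l`,
`M_l ≤ N₀ 2^{sd/2} ω̃(2^{1+s+l}) + N₀ 2^{-sα₀} ∑_{k≥1} 2^{-kσ} M_{k+s+l}`,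
with `ω̃` nonnegative increasing and bounded, then for a suitable fixed `s` one has
`M_l ≤ N ∑_{j≥1} 2^{-j} ω̃̃(2^{1+js+l})` where `ω̃̃(t) = ∑_{i≥0} 2^{-iσ/2} ω̃(2^i t)`. -/
theorem dyadic_iteration_lemma (d : ℕ) (hd : 0 < d) (σ α₀ N₀ : ℝ)
    (hσ : 0 < σ) (hα₀ : 0 < α₀) (hN₀ : 0 < N₀)
    (M : ℤ → ℝ) (hM_nonneg : ∀ l, 0 ≤ M l) (hM_bdd : ∃ B : ℝ, ∀ l, M l ≤ B)
    (ω : ℝ → ℝ) (hω_nonneg : ∀ t, 0 ≤ ω t) (hω_mono : Monotone ω)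
    (hω_bdd : ∃ B : ℝ, ∀ t, ω t ≤ B)
    (hiter : ∀ (s : ℕ), 0 < s → ∀ l : ℤ,
      M l ≤ N₀ * (2:ℝ) ^ ((s:ℝ) * (d:ℝ) / 2) * ω ((2:ℝ) ^ (1 + (s:ℤ) + l))
            + N₀ * (2:ℝ) ^ (-(s:ℝ) * α₀) *
                ∑' k : ℕ, (2:ℝ) ^ (-((k:ℝ) + 1) * σ) * M (((k:ℤ) + 1) + (s:ℤ) + l)) :
    ∃ s : ℕ, 0 < s ∧ ∃ N : ℝ, 0 < N ∧ ∀ l : ℤ,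
      M l ≤ N * ∑' j : ℕ, (2:ℝ) ^ (-((j:ℝ) + 1)) *
              ∑' i : ℕ, (2:ℝ) ^ (-(i:ℝ) * σ / 2) *
                ω ((2:ℝ) ^ (i:ℤ) * (2:ℝ) ^ (1 + ((j:ℤ) + 1) * (s:ℤ) + l)) := by
  classical
  obtain ⟨B₀, hB₀⟩ := hM_bdd
  obtain ⟨C₀, hC₀⟩ := hω_bdd
  set BM : ℝ := max B₀ 0 with hBMdef
  have hBM : ∀ l, M l ≤ BM := fun l => le_trans (hB₀ l) (le_max_left _ _)
  have hBM0 : (0:ℝ) ≤ BM := le_max_right _ _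
  set Bω : ℝ := max C₀ 0 with hBωdef
  have hBω : ∀ t, ω t ≤ Bω := fun t => le_trans (hC₀ t) (le_max_left _ _)
  have hBω0 : (0:ℝ) ≤ Bω := le_max_right _ _
  -- geometric ratios
  set r : ℝ := (2:ℝ) ^ (-(σ/2)) with hrdef
  have hr0 : 0 < r := Real.rpow_pos_of_pos (by norm_num) _
  have hr1 : r < 1 := Real.rpow_lt_one_of_one_lt_of_neg (by norm_num) (by linarith)
  set q : ℝ := (2:ℝ) ^ (-σ) with hqdef
  have hq0 : 0 < q := Real.rpow_pos_of_pos (by norm_num) _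
  have hq1 : q < 1 := Real.rpow_lt_one_of_one_lt_of_neg (by norm_num) (by linarith)
  have hq_rr : q = r * r := by
    rw [hqdef, hrdef, ← Real.rpow_add (by norm_num : (0:ℝ) < 2)]
    ring_nf
  have hqr : q ≤ r := by nlinarith [hq_rr, hr0, hr1]
  have hpow_r : ∀ j : ℕ, (2:ℝ) ^ (-(j:ℝ) * σ / 2) = r ^ j := by
    intro j
    have h : -(j:ℝ) * σ / 2 = -(j:ℝ) * (σ/2) := by ring
    rw [h, hrdef, two_rpow_neg_nat_mul]
  have hpow_q : ∀ k : ℕ, (2:ℝ) ^ (-((k:ℝ)+1) * σ) = q ^ (k+1) := by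
    intro k
    have h : -((k:ℝ)+1) * σ = -(((k+1:ℕ)):ℝ) * σ := by push_cast; ring
    rw [h, hqdef, two_rpow_neg_nat_mul]
  have hgeo_r : Summable (fun j : ℕ => r ^ j) := summable_geometric_of_lt_one hr0.le hr1
  have h1r : (0:ℝ) < 1 - r := by linarith
  set c : ℝ := (1 - r)⁻¹ with hcdef
  have hc0 : 0 < c := inv_pos.mpr h1r
  -- summability of the M-tails
  have hMt_sum : ∀ x : ℤ, Summable (fun j : ℕ => r ^ j * M (x + j)) := by
    intro x
    refine Summable.of_nonneg_of_le
      (fun j => mul_nonneg (by positivity) (hM_nonneg _)) (fun j => ?_)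
      (hgeo_r.mul_right BM)
    exact mul_le_mul_of_nonneg_left (hBM _) (by positivity)
  set Mt : ℤ → ℝ := fun x => ∑' j : ℕ, r ^ j * M (x + j) with hMtdef
  have hMt_nonneg : ∀ x, 0 ≤ Mt x := fun x => tsum_nonneg (fun j => mul_nonneg (by positivity) (hM_nonneg _))
  have hgeo_sum : ∑' j : ℕ, r ^ j = c := tsum_geometric_of_lt_one hr0.le hr1
  have hMt_le : ∀ x, Mt x ≤ c * BM := by
    intro x
    calc Mt x ≤ ∑' j : ℕ, r ^ j * BM := by
          refine Summable.tsum_le_tsum (fun j => mul_le_mul_of_nonneg_left (hBM _) (by positivity))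
            (hMt_sum x) (hgeo_r.mul_right BM)
      _ = c * BM := by rw [tsum_mul_right, hgeo_sum]
  have hM_le_Mt : ∀ x : ℤ, M x ≤ Mt x := by
    intro x
    have h := Summable.le_tsum (hMt_sum x) 0 (fun j _ => mul_nonneg (by positivity) (hM_nonneg _))
    simpa using h
  -- shift lemma : r^m * Mt (x+m) ≤ Mt x
  have hshift : ∀ (x : ℤ) (m : ℕ), r ^ m * Mt (x + m) ≤ Mt x := by
    intro x m
    have he : r ^ m * Mt (x + m) = ∑' j : ℕ, r ^ (j + m) * M (x + ((j + m : ℕ) : ℤ)) := by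
      rw [hMtdef, ← tsum_mul_left]
      refine tsum_congr (fun j => ?_)
      rw [pow_add]
      push_cast
      ring_nf
    rw [he]
    refine Summable.tsum_le_tsum_of_inj (fun j => j + m) (add_left_injective m)
      (fun k _ => mul_nonneg (by positivity) (hM_nonneg _))
      (fun j => le_of_eq (by push_cast; ring_nf)) ?_ (hMt_sum x)
    refine Summable.of_nonneg_of_le
      (fun j => mul_nonneg (by positivity) (hM_nonneg _)) (fun j => ?_)
      (hgeo_r.mul_right BM)
    calc r ^ (j + m) * M (x + ((j + m : ℕ) : ℤ)) ≤ r ^ (j + m) * BM :=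
          mul_le_mul_of_nonneg_left (hBM _) (by positivity)
      _ ≤ r ^ j * BM := by
          refine mul_le_mul_of_nonneg_right ?_ hBM0
          exact pow_le_pow_of_le_one hr0.le hr1.le (Nat.le_add_right j m)
  -- choice of s
  set ρ : ℝ := (2:ℝ) ^ (-α₀) with hρdef
  have hρ0 : 0 < ρ := Real.rpow_pos_of_pos (by norm_num) _
  have hρ1 : ρ < 1 := Real.rpow_lt_one_of_one_lt_of_neg (by norm_num) (by linarith)
  have hε0 : (0:ℝ) < (2 * N₀ * c)⁻¹ := by positivity
  obtain ⟨n, hn⟩ := exists_pow_lt_of_lt_one hε0 hρ1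
  set s : ℕ := max n 1 with hsdef
  have hs1 : 0 < s := lt_of_lt_of_le one_pos (le_max_right n 1)
  have hρs : ρ ^ s ≤ ρ ^ n := pow_le_pow_of_le_one hρ0.le hρ1.le (le_max_left n 1)
  set θ : ℝ := N₀ * (2:ℝ) ^ (-(s:ℝ) * α₀) with hθdef
  have hθ0 : 0 ≤ θ := by positivity
  have hθc : θ * c ≤ 1/2 := by
    have h2 : (2:ℝ) ^ (-(s:ℝ) * α₀) = ρ ^ s := by rw [hρdef, two_rpow_neg_nat_mul]
    have h3 : θ * c ≤ N₀ * (2 * N₀ * c)⁻¹ * c := by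
      rw [hθdef, h2]
      have hle : ρ ^ s ≤ (2 * N₀ * c)⁻¹ := le_trans hρs hn.le
      gcongr
    have h4 : N₀ * (2 * N₀ * c)⁻¹ * c = 1/2 := by
      field_simp
    linarith
  set A : ℝ := N₀ * (2:ℝ) ^ ((s:ℝ) * (d:ℝ) / 2) with hAdef
  have hA0 : 0 < A := by positivity
  -- the function W
  set W : ℤ → ℝ := fun x => ∑' i : ℕ, r ^ i * ω ((2:ℝ) ^ ((i:ℤ) + x)) with hWdef
  have hW_sum : ∀ x : ℤ, Summable (fun i : ℕ => r ^ i * ω ((2:ℝ) ^ ((i:ℤ) + x))) := by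
    intro x
    refine Summable.of_nonneg_of_le (fun i => mul_nonneg (by positivity) (hω_nonneg _))
      (fun i => mul_le_mul_of_nonneg_left (hBω _) (by positivity)) (hgeo_r.mul_right Bω)
  have hW_nonneg : ∀ x, 0 ≤ W x :=
    fun x => tsum_nonneg (fun i => mul_nonneg (by positivity) (hω_nonneg _))
  have hW_le : ∀ x, W x ≤ c * Bω := by
    intro x
    calc W x ≤ ∑' i : ℕ, r ^ i * Bω := by
          refine Summable.tsum_le_tsum (fun i => mul_le_mul_of_nonneg_left (hBω _) (by positivity))
            (hW_sum x) (hgeo_r.mul_right Bω)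
      _ = c * Bω := by rw [tsum_mul_right, hgeo_sum]
  -- the inner dyadic sums from the hypothesis
  set Kf : ℤ → ℕ → ℝ := fun x k => (2:ℝ) ^ (-((k:ℝ)+1) * σ) * M (((k:ℤ) + 1) + (s:ℤ) + x)
    with hKfdef
  have hKf_eq : ∀ x k, Kf x k = q ^ (k+1) * M (((k:ℤ) + 1) + (s:ℤ) + x) := by
    intro x k
    rw [hKfdef]
    simp only [hpow_q]
  have hgeo_q : Summable (fun k : ℕ => q ^ k) := summable_geometric_of_lt_one hq0.le hq1
  have hK_sum : ∀ x : ℤ, Summable (Kf x) := by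
    intro x
    refine Summable.of_nonneg_of_le (fun k => ?_) (fun k => ?_)
      ((hgeo_q.mul_right BM).mul_left q)
    · rw [hKf_eq]; exact mul_nonneg (by positivity) (hM_nonneg _)
    · rw [hKf_eq]
      calc q ^ (k+1) * M (((k:ℤ) + 1) + (s:ℤ) + x) ≤ q ^ (k+1) * BM :=
            mul_le_mul_of_nonneg_left (hBM _) (by positivity)
        _ = q * (q ^ k * BM) := by rw [pow_succ]; ring
  set K : ℤ → ℝ := fun x => ∑' k : ℕ, Kf x k with hKdef
  have hK_nonneg : ∀ x, 0 ≤ K x := by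
    intro x
    refine tsum_nonneg (fun k => ?_)
    rw [hKf_eq]; exact mul_nonneg (by positivity) (hM_nonneg _)
  have hK_le : ∀ x, K x ≤ c * BM := by
    intro x
    calc K x ≤ ∑' k : ℕ, r ^ k * BM := by
          refine Summable.tsum_le_tsum (fun k => ?_) (hK_sum x) (hgeo_r.mul_right BM)
          rw [hKf_eq]
          calc q ^ (k+1) * M (((k:ℤ) + 1) + (s:ℤ) + x) ≤ q ^ (k+1) * BM :=
                mul_le_mul_of_nonneg_left (hBM _) (by positivity)
            _ ≤ r ^ k * BM := by
                refine mul_le_mul_of_nonneg_right ?_ hBM0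
                calc q ^ (k+1) ≤ r ^ (k+1) :=
                      pow_le_pow_left₀ hq0.le hqr (k+1)
                  _ ≤ r ^ k := pow_le_pow_of_le_one hr0.le hr1.le (Nat.le_succ k)
      _ = c * BM := by rw [tsum_mul_right, hgeo_sum]
  -- Step A : the contraction inequality for Mt
  have keyA : ∀ l : ℤ, Mt l ≤ A * W (1 + (s:ℤ) + l) + (1/2) * Mt ((s:ℤ) + l) := by
    intro l
    -- double sum control
    set F : ℕ × ℕ → ℝ := fun p => r ^ p.1 * Kf (l + p.1) p.2 with hFdef
    have hF_eq : ∀ p : ℕ × ℕ,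
        F p = r ^ p.1 * (q ^ (p.2+1) * M (((p.2:ℤ) + 1) + (s:ℤ) + (l + p.1))) := by
      intro p
      rw [hFdef]
      simp only [hKf_eq]
    have hF_nonneg : ∀ p : ℕ × ℕ, 0 ≤ F p := by
      intro p
      rw [hF_eq]
      exact mul_nonneg (by positivity) (mul_nonneg (by positivity) (hM_nonneg _))
    have hF_sum : Summable F := by
      have hG : Summable (fun p : ℕ × ℕ => (r ^ p.1) * (q ^ p.2 * (q * BM))) :=
        Summable.mul_of_nonneg hgeo_r (hgeo_q.mul_right (q * BM))
          (fun j => by positivity) (fun k => by positivity)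
      refine Summable.of_nonneg_of_le hF_nonneg (fun p => ?_) hG
      rw [hF_eq]
      calc r ^ p.1 * (q ^ (p.2+1) * M (((p.2:ℤ) + 1) + (s:ℤ) + (l + p.1)))
            ≤ r ^ p.1 * (q ^ (p.2+1) * BM) := by
              refine mul_le_mul_of_nonneg_left
                (mul_le_mul_of_nonneg_left (hBM _) (by positivity)) (by positivity)
        _ = r ^ p.1 * (q ^ p.2 * (q * BM)) := by rw [pow_succ]; ring
    have hFfiber : ∀ j : ℕ, Summable (fun k : ℕ => F (j, k)) := by
      intro j
      exact (hK_sum (l + j)).mul_left (r ^ j)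
    have hFfiber2 : ∀ k : ℕ, Summable (fun j : ℕ => F (j, k)) := by
      intro k
      refine Summable.of_nonneg_of_le (fun j => hF_nonneg _) (fun j => ?_)
        (hgeo_r.mul_right (q ^ (k+1) * BM))
      rw [hF_eq]
      exact mul_le_mul_of_nonneg_left
        (mul_le_mul_of_nonneg_left (hBM _) (by positivity)) (by positivity)
    have hinner : ∀ k : ℕ, (∑' j : ℕ, F (j, k)) = q ^ (k+1) * Mt ((s:ℤ) + l + (k:ℤ) + 1) := by
      intro k
      have : ∀ j : ℕ, F (j, k) = q ^ (k+1) * (r ^ j * M (((s:ℤ) + l + (k:ℤ) + 1) + j)) := by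
        intro j
        rw [hF_eq]
        have harg : ((k:ℤ) + 1) + (s:ℤ) + (l + (j:ℤ)) = ((s:ℤ) + l + (k:ℤ) + 1) + (j:ℤ) := by
          ring
        rw [harg]
        ring
      rw [tsum_congr this, tsum_mul_left]
    have hbound : ∀ k : ℕ, (∑' j : ℕ, F (j, k)) ≤ r ^ (k+1) * Mt ((s:ℤ) + l) := by
      intro k
      rw [hinner k]
      have harg : (s:ℤ) + l + (k:ℤ) + 1 = ((s:ℤ) + l) + (((k+1:ℕ)):ℤ) := by push_cast; ring
      have hsh := hshift ((s:ℤ) + l) (k+1)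
      calc q ^ (k+1) * Mt ((s:ℤ) + l + (k:ℤ) + 1)
          = r ^ (k+1) * (r ^ (k+1) * Mt (((s:ℤ) + l) + (((k+1:ℕ)):ℤ))) := by
            rw [← harg, hq_rr, mul_pow]; ring
        _ ≤ r ^ (k+1) * Mt ((s:ℤ) + l) :=
            mul_le_mul_of_nonneg_left hsh (by positivity)
    have hsumk : Summable (fun k : ℕ => ∑' j : ℕ, F (j, k)) := by
      refine Summable.of_nonneg_of_le
        (fun k => tsum_nonneg (fun j => hF_nonneg _)) (fun k => le_trans (hbound k) ?_)
        ((hgeo_r.mul_right (Mt ((s:ℤ) + l))).mul_left r)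
      have : r ^ (k+1) * Mt ((s:ℤ) + l) = r * (r ^ k * Mt ((s:ℤ) + l)) := by
        rw [pow_succ]; ring
      rw [this]
    have claim2 : (∑' j : ℕ, r ^ j * K (l + j)) ≤ c * Mt ((s:ℤ) + l) := by
      have e1 : (∑' j : ℕ, r ^ j * K (l + j)) = ∑' j : ℕ, ∑' k : ℕ, F (j, k) := by
        refine tsum_congr (fun j => ?_)
        rw [hKdef]
        simp only []
        rw [← tsum_mul_left]
      have e2 : (∑' p : ℕ × ℕ, F p) = ∑' j : ℕ, ∑' k : ℕ, F (j, k) :=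
        Summable.tsum_prod' hF_sum hFfiber
      have e3 : (∑' p : ℕ × ℕ, F p) = ∑' k : ℕ, ∑' j : ℕ, F (j, k) := by
        have h1 : (∑' p : ℕ × ℕ, F (p.2, p.1)) = ∑' p : ℕ × ℕ, F p :=
          (Equiv.prodComm ℕ ℕ).tsum_eq F
        have h2 : (∑' p : ℕ × ℕ, F (p.2, p.1)) = ∑' k : ℕ, ∑' j : ℕ, F (j, k) :=
          Summable.tsum_prod' hF_sum.prod_symm (fun k => hFfiber2 k)
        rw [← h1, h2]
      rw [e1, ← e2, e3]
      calc (∑' k : ℕ, ∑' j : ℕ, F (j, k))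
          ≤ ∑' k : ℕ, r ^ (k+1) * Mt ((s:ℤ) + l) := by
            refine Summable.tsum_le_tsum hbound hsumk ?_
            refine (((hgeo_r.mul_right (Mt ((s:ℤ) + l))).mul_left r)).congr (fun k => ?_)
            rw [pow_succ]; ring
        _ = (r * c) * Mt ((s:ℤ) + l) := by
            have : ∀ k : ℕ, r ^ (k+1) * Mt ((s:ℤ) + l) = r * (r ^ k * Mt ((s:ℤ) + l)) := by
              intro k; rw [pow_succ]; ring
            rw [tsum_congr this, tsum_mul_left, tsum_mul_right, hgeo_sum]
            ring
        _ ≤ c * Mt ((s:ℤ) + l) := by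
            refine mul_le_mul_of_nonneg_right ?_ (hMt_nonneg _)
            nlinarith [hc0, hr1, hr0]
    -- apply the hypothesis termwise
    have step1 : ∀ j : ℕ, r ^ j * M (l + j) ≤
        r ^ j * (A * ω ((2:ℝ) ^ (1 + (s:ℤ) + (l + (j:ℤ)))) + θ * K (l + j)) := by
      intro j
      refine mul_le_mul_of_nonneg_left ?_ (by positivity)
      exact hiter s hs1 (l + j)
    have hRHS1_sum : Summable
        (fun j : ℕ => r ^ j * (A * ω ((2:ℝ) ^ (1 + (s:ℤ) + (l + (j:ℤ)))))) := by
      refine Summable.of_nonneg_of_le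
        (fun j => mul_nonneg (by positivity) (mul_nonneg hA0.le (hω_nonneg _)))
        (fun j => ?_)
        (hgeo_r.mul_right (A * Bω))
      exact mul_le_mul_of_nonneg_left
        (mul_le_mul_of_nonneg_left (hBω _) hA0.le) (by positivity)
    have hRHS2_sum : Summable (fun j : ℕ => r ^ j * (θ * K (l + j))) := by
      refine Summable.of_nonneg_of_le
        (fun j => by have := hK_nonneg (l + j); positivity) (fun j => ?_)
        (hgeo_r.mul_right (θ * (c * BM)))
      exact mul_le_mul_of_nonneg_left
        (mul_le_mul_of_nonneg_left (hK_le _) hθ0) (by positivity)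
    have hRHS_sum : Summable (fun j : ℕ =>
        r ^ j * (A * ω ((2:ℝ) ^ (1 + (s:ℤ) + (l + (j:ℤ)))) + θ * K (l + j))) :=
      (hRHS1_sum.add hRHS2_sum).congr (fun j => by ring)
    calc Mt l ≤ ∑' j : ℕ,
          r ^ j * (A * ω ((2:ℝ) ^ (1 + (s:ℤ) + (l + (j:ℤ)))) + θ * K (l + j)) :=
          Summable.tsum_le_tsum step1 (hMt_sum l) hRHS_sum
      _ = (∑' j : ℕ, r ^ j * (A * ω ((2:ℝ) ^ (1 + (s:ℤ) + (l + (j:ℤ))))))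
            + ∑' j : ℕ, r ^ j * (θ * K (l + j)) := by
          rw [tsum_congr (fun j => mul_add (r ^ j) _ _), Summable.tsum_add hRHS1_sum hRHS2_sum]
      _ ≤ A * W (1 + (s:ℤ) + l) + (1/2) * Mt ((s:ℤ) + l) := by
          refine add_le_add ?_ ?_
          · refine le_of_eq ?_
            have e : ∀ j : ℕ, r ^ j * (A * ω ((2:ℝ) ^ (1 + (s:ℤ) + (l + (j:ℤ)))))
                = A * (r ^ j * ω ((2:ℝ) ^ ((j:ℤ) + (1 + (s:ℤ) + l)))) := by
              intro j
              have harg : 1 + (s:ℤ) + (l + (j:ℤ)) = (j:ℤ) + (1 + (s:ℤ) + l) := by ring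
              rw [harg]; ring
            rw [tsum_congr e, tsum_mul_left]
          · have e : ∀ j : ℕ, r ^ j * (θ * K (l + j)) = θ * (r ^ j * K (l + j)) := by
              intro j; ring
            rw [tsum_congr e, tsum_mul_left]
            calc θ * ∑' j : ℕ, r ^ j * K (l + j) ≤ θ * (c * Mt ((s:ℤ) + l)) :=
                  mul_le_mul_of_nonneg_left claim2 hθ0
              _ = (θ * c) * Mt ((s:ℤ) + l) := by ring
              _ ≤ (1/2) * Mt ((s:ℤ) + l) :=
                  mul_le_mul_of_nonneg_right hθc (hMt_nonneg _)
  -- Step B : iteration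
  set T : ℝ := c * BM with hTdef
  have hT0 : 0 ≤ T := by positivity
  set u : ℤ → ℕ → ℝ := fun l j => W (1 + ((j:ℤ) + 1) * (s:ℤ) + l) with hudef
  have hu_nonneg : ∀ l j, 0 ≤ u l j := fun l j => hW_nonneg _
  have hu_le : ∀ l j, u l j ≤ c * Bω := fun l j => hW_le _
  have hu0 : ∀ l : ℤ, u l 0 = W (1 + (s:ℤ) + l) := by
    intro l
    rw [hudef]
    norm_num
  have huS : ∀ (l : ℤ) (j : ℕ), u ((s:ℤ) + l) j = u l (j+1) := by
    intro l j
    rw [hudef]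
    simp only []
    congr 1
    push_cast
    ring
  have iter : ∀ (m : ℕ) (l : ℤ),
      Mt l ≤ A * (∑ j ∈ Finset.range m, (1/2:ℝ) ^ j * u l j) + (1/2:ℝ) ^ m * T := by
    intro m
    induction m with
    | zero =>
        intro l
        simpa using le_trans (hMt_le l) (by rw [hTdef])
    | succ m ih =>
        intro l
        have h2 := ih ((s:ℤ) + l)
        have hsum_eq : (∑ j ∈ Finset.range m, (1/2:ℝ) ^ j * u ((s:ℤ) + l) j)
            = ∑ j ∈ Finset.range m, (1/2:ℝ) ^ j * u l (j+1) :=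
          Finset.sum_congr rfl (fun j _ => by rw [huS])
        calc Mt l ≤ A * W (1 + (s:ℤ) + l) + (1/2) * Mt ((s:ℤ) + l) := keyA l
          _ ≤ A * W (1 + (s:ℤ) + l) + (1/2) *
                (A * (∑ j ∈ Finset.range m, (1/2:ℝ) ^ j * u ((s:ℤ) + l) j)
                  + (1/2:ℝ) ^ m * T) := by
              refine add_le_add_right (mul_le_mul_of_nonneg_left h2 (by norm_num)) _
          _ = A * (∑ j ∈ Finset.range (m+1), (1/2:ℝ) ^ j * u l j) + (1/2:ℝ) ^ (m+1) * T := by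
              rw [hsum_eq, Finset.sum_range_succ', ← hu0 l]
              have e2 : ∑ j ∈ Finset.range m, (1/2:ℝ) ^ (j+1) * u l (j+1)
                  = (1/2) * ∑ j ∈ Finset.range m, (1/2:ℝ) ^ j * u l (j+1) := by
                rw [Finset.mul_sum]
                exact Finset.sum_congr rfl (fun j _ => by rw [pow_succ]; ring)
              rw [e2]
              push_cast
              ring
  -- Step C : pass to the limit
  refine ⟨s, hs1, 2 * A, by positivity, fun l => ?_⟩
  have hu_sum : Summable (fun j : ℕ => (1/2:ℝ) ^ j * u l j) := by
    refine Summable.of_nonneg_of_le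
      (fun j => mul_nonneg (by positivity) (hu_nonneg l j)) (fun j => ?_)
      ((summable_geometric_of_lt_one (by norm_num) (by norm_num : (1/2:ℝ) < 1)).mul_right
        (c * Bω))
    exact mul_le_mul_of_nonneg_left (hu_le l j) (by positivity)
  set Sfull : ℝ := ∑' j : ℕ, (1/2:ℝ) ^ j * u l j with hSdef
  have hMl : ∀ m : ℕ, M l ≤ A * Sfull + (1/2:ℝ) ^ m * T := by
    intro m
    have h1 := iter m l
    have h2 : (∑ j ∈ Finset.range m, (1/2:ℝ) ^ j * u l j) ≤ Sfull :=
      Summable.sum_le_tsum (Finset.range m) (fun j _ => mul_nonneg (by positivity) (hu_nonneg l j)) hu_sum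
    calc M l ≤ Mt l := hM_le_Mt l
      _ ≤ A * (∑ j ∈ Finset.range m, (1/2:ℝ) ^ j * u l j) + (1/2:ℝ) ^ m * T := h1
      _ ≤ A * Sfull + (1/2:ℝ) ^ m * T := by
          refine add_le_add_left (mul_le_mul_of_nonneg_left h2 hA0.le) _
  have hlim : Tendsto (fun m : ℕ => A * Sfull + (1/2:ℝ) ^ m * T) atTop (𝓝 (A * Sfull)) := by
    have h := (tendsto_pow_atTop_nhds_zero_of_lt_one (by norm_num : (0:ℝ) ≤ 1/2)
      (by norm_num : (1/2:ℝ) < 1)).mul_const T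
    have h2 := (tendsto_const_nhds :
      Tendsto (fun _ : ℕ => A * Sfull) atTop (𝓝 (A * Sfull))).add h
    simpa using h2
  have hfinal : M l ≤ A * Sfull := ge_of_tendsto' hlim (fun m => hMl m)
  -- identify Sfull with the target sum
  have htarget : (∑' j : ℕ, (2:ℝ) ^ (-((j:ℝ) + 1)) *
      ∑' i : ℕ, (2:ℝ) ^ (-(i:ℝ) * σ / 2) *
        ω ((2:ℝ) ^ (i:ℤ) * (2:ℝ) ^ (1 + ((j:ℤ) + 1) * (s:ℤ) + l)))
      = (1/2) * Sfull := by
    have hinner : ∀ j : ℕ, (∑' i : ℕ, (2:ℝ) ^ (-(i:ℝ) * σ / 2) *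
        ω ((2:ℝ) ^ (i:ℤ) * (2:ℝ) ^ (1 + ((j:ℤ) + 1) * (s:ℤ) + l))) = u l j := by
      intro j
      rw [hudef, hWdef]
      refine tsum_congr (fun i => ?_)
      rw [hpow_r]
      have harg : (2:ℝ) ^ (i:ℤ) * (2:ℝ) ^ (1 + ((j:ℤ) + 1) * (s:ℤ) + l)
          = (2:ℝ) ^ ((i:ℤ) + (1 + ((j:ℤ) + 1) * (s:ℤ) + l)) :=
        (zpow_add₀ (by norm_num : (2:ℝ) ≠ 0) _ _).symm
      rw [harg]
    have hcoef : ∀ j : ℕ, (2:ℝ) ^ (-((j:ℝ) + 1)) = (1/2:ℝ) ^ (j+1) := by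
      intro j
      have h : -((j:ℝ) + 1) = -(((j+1:ℕ)):ℝ) * 1 := by push_cast; ring
      rw [h, two_rpow_neg_nat_mul]
      norm_num
    calc (∑' j : ℕ, (2:ℝ) ^ (-((j:ℝ) + 1)) *
        ∑' i : ℕ, (2:ℝ) ^ (-(i:ℝ) * σ / 2) *
          ω ((2:ℝ) ^ (i:ℤ) * (2:ℝ) ^ (1 + ((j:ℤ) + 1) * (s:ℤ) + l)))
        = ∑' j : ℕ, (1/2) * ((1/2:ℝ) ^ j * u l j) := by
          refine tsum_congr (fun j => ?_)
          rw [hinner j, hcoef j, pow_succ]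
          ring
      _ = (1/2) * Sfull := by rw [tsum_mul_left, hSdef]
  rw [htarget]
  calc M l ≤ A * Sfull := hfinal
    _ = 2 * A * ((1/2) * Sfull) := by ring
end

section
/- Equivalence of Zygmund seminorm under difference quotients (one direction): Let α ∈ (0,1), β ∈ (0,1), and let f : ℝ^d → ℝ be bounded. For nonzero h ∈ ℝ^d define f_{β,h}(x) = |h|^{−β}(f(x+h) − f(x)). Suppose ‖f_{β,h}‖_{L^∞} ≤ K and sup_x |f_{β,h}(x+y) + f_{β,h}(x−y) − 2 f_{β,h}(x)| ≤ K |y|^α for all nonzero h, y (with α + β < 2, α + β ≠ 1 or α + β = 1 allowed). If moreover α + β < 1 or α + β ∈ (1,2), then sup_x |f(x+y) + f(x−y) − 2f(x)| ≤ N(α,β)(‖f‖_{L^∞} + K)|y|^{α+β} for all nonzero y ∈ ℝ^d; i.e. f lies in the Zygmund class of order α+β. -/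
/-- Zygmund bound from difference quotients: let `α, β ∈ (0,1)` with `α + β ≠ 1`, and let
`f` be bounded with `‖f‖_∞ ≤ M`. If for every `h ≠ 0` the difference quotient
`f_{β,h}(x) = |h|^{-β}(f (x+h) - f x)` satisfies `‖f_{β,h}‖_∞ ≤ K` and the Zygmund-`α`
bound `|f_{β,h}(x+y) + f_{β,h}(x-y) - 2 f_{β,h}(x)| ≤ K |y|^α`, then `f` lies in the
Zygmund class of order `α + β`:
`|f (x+y) + f (x-y) - 2 f x| ≤ N(α,β) (‖f‖_∞ + K) |y|^{α+β}`. -/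
theorem zygmund_from_difference_quotients (d : ℕ) (α β : ℝ)
    (hα : α ∈ Set.Ioo (0:ℝ) 1) (hβ : β ∈ Set.Ioo (0:ℝ) 1) (hne : α + β ≠ 1) :
    ∃ N : ℝ, 0 < N ∧ ∀ (f : EuclideanSpace ℝ (Fin d) → ℝ) (M K : ℝ), 0 ≤ M → 0 ≤ K →
      (∀ x, |f x| ≤ M) →
      (∀ h : EuclideanSpace ℝ (Fin d), h ≠ 0 →
        (∀ x, |‖h‖ ^ (-β) * (f (x + h) - f x)| ≤ K) ∧
        (∀ (x : EuclideanSpace ℝ (Fin d)) (y : EuclideanSpace ℝ (Fin d)), y ≠ 0 →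
          |‖h‖ ^ (-β) * (f (x + y + h) - f (x + y))
            + ‖h‖ ^ (-β) * (f (x - y + h) - f (x - y))
            - 2 * (‖h‖ ^ (-β) * (f (x + h) - f x))| ≤ K * ‖y‖ ^ α)) →
      ∀ y : EuclideanSpace ℝ (Fin d), y ≠ 0 → ∀ x,
        |f (x + y) + f (x - y) - 2 * f x| ≤ N * (M + K) * ‖y‖ ^ (α + β) := by
  obtain ⟨hα0, hα1⟩ := hα
  obtain ⟨hβ0, hβ1⟩ := hβ
  have ht0 : 0 < α + β := by linarith
  have ht2 : α + β < 2 := by linarith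
  set r : ℝ := (2:ℝ) ^ (α + β - 2) with hr
  have hr0 : 0 < r := Real.rpow_pos_of_pos (by norm_num) _
  have hr1 : r < 1 := Real.rpow_lt_one_of_one_lt_of_neg (by norm_num) (by linarith)
  have h1r : 0 < 1 - r := by linarith
  refine ⟨1/(2*(1-r)), by positivity, ?_⟩
  set N : ℝ := 1/(2*(1-r)) with hNdef
  have hN0 : 0 < N := by positivity
  have hNr : N * (1 - r) = 1/2 := by
    rw [hNdef]; field_simp
  intro f M K hM hK hfM hyp y hy x
  set D : EuclideanSpace ℝ (Fin d) → EuclideanSpace ℝ (Fin d) → ℝ :=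
    fun x y => f (x + y) + f (x - y) - 2 * f x with hD
  -- shift bound
  have shift : ∀ h : EuclideanSpace ℝ (Fin d), h ≠ 0 →
      ∀ (x y : EuclideanSpace ℝ (Fin d)), y ≠ 0 →
      |D (x + h) y - D x y| ≤ K * ‖y‖ ^ α * ‖h‖ ^ β := by
    intro h hh x y hy
    have hpos : (0:ℝ) < ‖h‖ := norm_pos_iff.mpr hh
    have h1 := (hyp h hh).2 x y hy
    have e1 : x + y + h = x + h + y := by abel
    have e2 : x - y + h = x + h - y := by abel
    have key : ‖h‖ ^ (-β) * (f (x + y + h) - f (x + y))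
            + ‖h‖ ^ (-β) * (f (x - y + h) - f (x - y))
            - 2 * (‖h‖ ^ (-β) * (f (x + h) - f x))
        = ‖h‖ ^ (-β) * (D (x + h) y - D x y) := by
      rw [e1, e2, hD]; ring
    rw [key, abs_mul, abs_of_nonneg (Real.rpow_nonneg (norm_nonneg h) _)] at h1
    have hmul : ‖h‖ ^ (-β) * ‖h‖ ^ β = 1 := by
      rw [← Real.rpow_add hpos]; simp
    calc |D (x + h) y - D x y|
        = (‖h‖ ^ (-β) * |D (x + h) y - D x y|) * ‖h‖ ^ β := by
          rw [mul_comm (‖h‖ ^ (-β)) _, mul_assoc, hmul, mul_one]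
      _ ≤ (K * ‖y‖ ^ α) * ‖h‖ ^ β := by
          apply mul_le_mul_of_nonneg_right h1 (Real.rpow_nonneg (norm_nonneg h) _)
  -- combine exponents
  have hyt : ∀ y : EuclideanSpace ℝ (Fin d), y ≠ 0 →
      ‖y‖ ^ α * ‖y‖ ^ β = ‖y‖ ^ (α + β) := by
    intro y hy
    rw [← Real.rpow_add (norm_pos_iff.mpr hy)]
  -- the dyadic step
  have step : ∀ (x y : EuclideanSpace ℝ (Fin d)), y ≠ 0 →
      |D x y| ≤ (1/4) * |D x ((2:ℝ) • y)| + (K/2) * ‖y‖ ^ (α + β) := by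
    intro x y hy
    have hny : (-y : EuclideanSpace ℝ (Fin d)) ≠ 0 := neg_ne_zero.mpr hy
    have s1 := shift y hy x y hy
    have s2 := shift (-y) hny x y hy
    rw [norm_neg] at s2
    have e3 : x + -y = x - y := by abel
    rw [e3] at s2
    have ident : D x ((2:ℝ) • y)
        = (D (x + y) y - D x y) + (D (x - y) y - D x y) + 4 * D x y := by
      have a1 : x + (2:ℝ) • y = x + y + y := by
        rw [two_smul]; abel
      have a2 : x - (2:ℝ) • y = x - y - y := by
        rw [two_smul]; abel
      have a3 : x + y - y = x := by abel
      have a4 : x - y + y = x := by abel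
      rw [hD]
      simp only [a1, a2, a3, a4]
      ring
    have hyab := hyt y hy
    have habs : |4 * D x y| ≤ |D x ((2:ℝ) • y)| + 2 * (K * ‖y‖ ^ α * ‖y‖ ^ β) := by
      have : 4 * D x y = D x ((2:ℝ) • y) - (D (x + y) y - D x y) - (D (x - y) y - D x y) := by
        rw [ident]; ring
      rw [this]
      calc |D x ((2:ℝ) • y) - (D (x + y) y - D x y) - (D (x - y) y - D x y)|
          ≤ |D x ((2:ℝ) • y)| + |D (x + y) y - D x y| + |D (x - y) y - D x y| := by
            exact (abs_sub _ _).trans (by gcongr; exact abs_sub _ _)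
        _ ≤ |D x ((2:ℝ) • y)| + (K * ‖y‖ ^ α * ‖y‖ ^ β) + (K * ‖y‖ ^ α * ‖y‖ ^ β) := by
            gcongr
        _ = |D x ((2:ℝ) • y)| + 2 * (K * ‖y‖ ^ α * ‖y‖ ^ β) := by ring
    rw [abs_mul, abs_of_nonneg (by norm_num : (0:ℝ) ≤ 4)] at habs
    have : K * ‖y‖ ^ α * ‖y‖ ^ β = K * ‖y‖ ^ (α + β) := by
      rw [mul_assoc, hyab]
    rw [this] at habs
    linarith
  -- induction
  have iter : ∀ n : ℕ, ∀ (x y : EuclideanSpace ℝ (Fin d)), y ≠ 0 →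
      |D x y| ≤ 4 * M * (1/4:ℝ)^n + N * K * ‖y‖ ^ (α + β) := by
    intro n
    induction n with
    | zero =>
      intro x y hy
      have : |D x y| ≤ 4 * M := by
        have hDxy : D x y = f (x + y) + f (x - y) - 2 * f x := rfl
        rw [hDxy]
        have h1 := hfM (x + y)
        have h2 := hfM (x - y)
        have h3 := hfM x
        have := abs_le.mp h1
        have := abs_le.mp h2
        have := abs_le.mp h3
        rw [abs_le]; constructor <;> linarith
      have hpos : 0 ≤ N * K * ‖y‖ ^ (α + β) := by positivity
      simp only [pow_zero, mul_one]
      linarith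
    | succ n ih =>
      intro x y hy
      have h2y : ((2:ℝ) • y : EuclideanSpace ℝ (Fin d)) ≠ 0 := by
        simp [smul_eq_zero, hy]
      have hb := ih x ((2:ℝ) • y) h2y
      have hn2y : ‖(2:ℝ) • y‖ ^ (α + β) = (2:ℝ)^(α+β) * ‖y‖ ^ (α + β) := by
        rw [norm_smul]
        simp only [Real.norm_ofNat]
        rw [Real.mul_rpow (by norm_num) (norm_nonneg y)]
      rw [hn2y] at hb
      have hs := step x y hy
      have hrw : (2:ℝ)^(α+β) = 4 * r := by
        rw [hr, show (4:ℝ) = (2:ℝ)^(2:ℝ) by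
          rw [show (2:ℝ) = ((2:ℕ):ℝ) by norm_num, Real.rpow_natCast]; norm_num]
        rw [← Real.rpow_add (by norm_num)]
        ring_nf
      rw [hrw] at hb
      have hyp0 : 0 ≤ ‖y‖ ^ (α + β) := Real.rpow_nonneg (norm_nonneg y) _
      have hNK : N * r + 1/2 = N := by nlinarith [hNr]
      calc |D x y| ≤ (1/4) * |D x ((2:ℝ) • y)| + (K/2) * ‖y‖ ^ (α + β) := hs
        _ ≤ (1/4) * (4 * M * (1/4:ℝ)^n + N * K * (4 * r * ‖y‖ ^ (α + β)))
              + (K/2) * ‖y‖ ^ (α + β) := by gcongr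
        _ = 4 * M * (1/4:ℝ)^(n+1) + (N * r + 1/2) * (K * ‖y‖ ^ (α + β)) := by ring
        _ = 4 * M * (1/4:ℝ)^(n+1) + N * K * ‖y‖ ^ (α + β) := by rw [hNK]; ring
  -- pass to the limit
  have hlim : Filter.Tendsto (fun n : ℕ => 4 * M * (1/4:ℝ)^n + N * K * ‖y‖ ^ (α + β))
      Filter.atTop (nhds (N * K * ‖y‖ ^ (α + β))) := by
    have h1 : Filter.Tendsto (fun n : ℕ => (1/4:ℝ)^n) Filter.atTop (nhds 0) := by
      apply tendsto_pow_atTop_nhds_zero_of_lt_one <;> norm_num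
    have h2 := (h1.const_mul (4*M)).add_const (N * K * ‖y‖ ^ (α + β))
    simpa using h2
  have hle : |D x y| ≤ N * K * ‖y‖ ^ (α + β) :=
    ge_of_tendsto' hlim (fun n => iter n x y hy)
  have : N * K * ‖y‖ ^ (α + β) ≤ N * (M + K) * ‖y‖ ^ (α + β) := by
    have hyp0 : 0 ≤ ‖y‖ ^ (α + β) := Real.rpow_nonneg (norm_nonneg y) _
    gcongr
    linarith
  exact hle.trans this
end
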